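/- arXiv:1405.3892 — 4 statements merged into one kernel-verified Lean document; each statement's English description precedes it below -/
import Mathlib

section
/- Let σ ∈ ℝ and let Â, B̂, Ĉ be bounded measurable functions on ℝ that are 2πσ-pseudo-periodic, i.e. F(q+2π) = e^{2πiσ}F(q). Then for all q ∈ [-π,π], the double periodic convolution satisfies χ_B(q) (Â *₁ B̂ *₁ Ĉ)(q) = χ_B(q) Σ_{m=-1}^{1} e^{2πimσ} (Â *₁ [B̂ *₁ (χ_B Ĉ)])(q - 2mπ), where (f *₁ g)(q) = ∫_{-π}^{π} f(ξ) g(q-ξ) dξ and χ_B is the indicator of B = [-π,π]. -/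
open MeasureTheory

/-- Periodic convolution over the fundamental cell B = [-π, π]. -/
noncomputable def conv1 (f g : ℝ → ℂ) (q : ℝ) : ℂ :=
  ∫ ξ in (-Real.pi)..Real.pi, f ξ * g (q - ξ)

/-- Indicator function of B = [-π, π]. -/
noncomputable def chiB (q : ℝ) : ℂ :=
  Set.indicator (Set.Icc (-Real.pi) Real.pi) (fun _ => (1 : ℂ)) q

lemma measurable_chiB : Measurable chiB :=
  measurable_const.indicator measurableSet_Icc

lemma chiB_of_mem {x : ℝ} (h : x ∈ Set.Icc (-Real.pi) Real.pi) : chiB x = 1 :=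
  Set.indicator_of_mem h _

lemma chiB_of_not_mem {x : ℝ} (h : x ∉ Set.Icc (-Real.pi) Real.pi) : chiB x = 0 :=
  Set.indicator_of_notMem h _

lemma norm_chiB_le (x : ℝ) : ‖chiB x‖ ≤ 1 := by
  by_cases h : x ∈ Set.Icc (-Real.pi) Real.pi
  · rw [chiB_of_mem h]; simp
  · rw [chiB_of_not_mem h]; simp

lemma chiB_sum {t : ℝ} (h1 : -(3 * Real.pi) ≤ t) (h2 : t ≤ 3 * Real.pi)
    (hne1 : t ≠ Real.pi) (hne2 : t ≠ -Real.pi) :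
    chiB (t + 2 * Real.pi) + chiB t + chiB (t - 2 * Real.pi) = 1 := by
  have hpi := Real.pi_pos
  rcases lt_trichotomy t (-Real.pi) with h | h | h
  · rw [chiB_of_mem ⟨by linarith, by linarith⟩,
      chiB_of_not_mem (fun hc => by have := hc.1; simp only [Set.mem_Icc] at hc; linarith),
      chiB_of_not_mem (fun hc => by simp only [Set.mem_Icc] at hc; linarith [hc.1])]
    · ring
  · exact absurd h hne2
  · rcases lt_trichotomy t Real.pi with h' | h' | h'
    · rw [chiB_of_not_mem (fun hc => by simp only [Set.mem_Icc] at hc; linarith [hc.2]),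
        chiB_of_mem ⟨by linarith, by linarith⟩,
        chiB_of_not_mem (fun hc => by simp only [Set.mem_Icc] at hc; linarith [hc.1])]
      ring
    · exact absurd h' hne1
    · rw [chiB_of_not_mem (fun hc => by simp only [Set.mem_Icc] at hc; linarith [hc.2]),
        chiB_of_not_mem (fun hc => by simp only [Set.mem_Icc] at hc; linarith [hc.2]),
        chiB_of_mem ⟨by linarith, by linarith⟩]
      ring

lemma intervalIntegrable_of_bounded {f : ℝ → ℂ} (hf : Measurable f) {M : ℝ}
    (hM : ∀ x, ‖f x‖ ≤ M) (a b : ℝ) : IntervalIntegrable f volume a b := by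
  rw [intervalIntegrable_iff]
  haveI : IsFiniteMeasure (volume.restrict (Set.uIoc a b)) := by
    constructor
    rw [Measure.restrict_apply_univ, Set.uIoc]
    exact measure_Ioc_lt_top
  exact ⟨hf.aestronglyMeasurable,
    HasFiniteIntegral.of_bounded (Filter.Eventually.of_forall hM)⟩

lemma measurable_conv1 {f g : ℝ → ℂ} (hf : Measurable f) (hg : Measurable g) :
    Measurable (conv1 f g) := by
  have hle : -Real.pi ≤ Real.pi := by linarith [Real.pi_pos]
  have : conv1 f g = fun y => ∫ ζ, f ζ * g (y - ζ) ∂(volume.restrict (Set.Ioc (-Real.pi) Real.pi)) := by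
    funext y
    rw [conv1, intervalIntegral.integral_of_le hle]
  rw [this]
  have hsm : StronglyMeasurable (fun p : ℝ × ℝ => f p.2 * g (p.1 - p.2)) :=
    ((hf.comp measurable_snd).mul (hg.comp (measurable_fst.sub measurable_snd))).stronglyMeasurable
  exact hsm.integral_prod_right'.measurable

lemma norm_conv1_le {f g : ℝ → ℂ} {Mf Mg : ℝ} (hf : ∀ x, ‖f x‖ ≤ Mf)
    (hg : ∀ x, ‖g x‖ ≤ Mg) (y : ℝ) :
    ‖conv1 f g y‖ ≤ Mf * Mg * |Real.pi - (-Real.pi)| := by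
  have h0f : 0 ≤ Mf := le_trans (norm_nonneg _) (hf 0)
  apply intervalIntegral.norm_integral_le_of_norm_le_const
  intro x _
  rw [norm_mul]
  exact mul_le_mul (hf x) (hg _) (norm_nonneg _) h0f

lemma inner_step (σ : ℝ) (B C : ℝ → ℂ) (hBm : Measurable B) (hCm : Measurable C)
    (hBb : ∃ M : ℝ, ∀ q, ‖B q‖ ≤ M) (hCb : ∃ M : ℝ, ∀ q, ‖C q‖ ≤ M)
    (hCp : ∀ q : ℝ, C (q + 2 * Real.pi) = Complex.exp (2 * Real.pi * Complex.I * σ) * C q)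
    {y : ℝ} (hy1 : -(2 * Real.pi) ≤ y) (hy2 : y ≤ 2 * Real.pi) :
    conv1 B C y =
      Complex.exp (-(2 * Real.pi * Complex.I * σ))
          * conv1 B (fun x => chiB x * C x) (y + 2 * Real.pi)
        + conv1 B (fun x => chiB x * C x) y
        + Complex.exp (2 * Real.pi * Complex.I * σ)
          * conv1 B (fun x => chiB x * C x) (y - 2 * Real.pi) := by
  have hpi := Real.pi_pos
  obtain ⟨MB, hMB⟩ := hBb
  obtain ⟨MC, hMC⟩ := hCb
  have hMB0 : 0 ≤ MB := le_trans (norm_nonneg _) (hMB 0)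
  set E := Complex.exp (2 * Real.pi * Complex.I * σ) with hE
  set E' := Complex.exp (-(2 * Real.pi * Complex.I * σ)) with hE'
  have hEne : E' * E = 1 := by
    rw [hE, hE', ← Complex.exp_add, neg_add_cancel, Complex.exp_zero]
  set g := fun x => chiB x * C x with hg
  have hgm : Measurable g := measurable_chiB.mul hCm
  have hgb : ∀ x, ‖g x‖ ≤ MC := by
    intro x
    calc ‖g x‖ = ‖chiB x‖ * ‖C x‖ := norm_mul _ _
      _ ≤ 1 * MC := mul_le_mul (norm_chiB_le x) (hMC x) (norm_nonneg _) zero_le_one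
      _ = MC := one_mul _
  have hbnd : ∀ c ζ : ℝ, ‖B ζ * g (c - ζ)‖ ≤ MB * MC := by
    intro c ζ
    rw [norm_mul]
    exact mul_le_mul (hMB ζ) (hgb _) (norm_nonneg _) hMB0
  have II : ∀ c : ℝ, IntervalIntegrable (fun ζ => B ζ * g (c - ζ)) volume (-Real.pi) Real.pi :=
    fun c => intervalIntegrable_of_bounded
      (hBm.mul (hgm.comp (measurable_const.sub measurable_id))) (hbnd c) _ _
  have key : conv1 B C y =
      ∫ ζ in (-Real.pi)..Real.pi,
        (E' * (B ζ * g (y + 2 * Real.pi - ζ)) + B ζ * g (y - ζ)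
          + E * (B ζ * g (y - 2 * Real.pi - ζ))) := by
    rw [conv1]
    apply intervalIntegral.integral_congr_ae
    have hz1 : ∀ᵐ ζ : ℝ, ζ ≠ y - Real.pi := by
      rw [MeasureTheory.ae_iff]
      simpa using measure_singleton (y - Real.pi)
    have hz2 : ∀ᵐ ζ : ℝ, ζ ≠ y + Real.pi := by
      rw [MeasureTheory.ae_iff]
      simpa using measure_singleton (y + Real.pi)
    filter_upwards [hz1, hz2] with ζ hne1 hne2 hmem
    rw [Set.uIoc_of_le (by linarith : -Real.pi ≤ Real.pi)] at hmem
    obtain ⟨hm1, hm2⟩ := hmem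
    have e1 : y + 2 * Real.pi - ζ = (y - ζ) + 2 * Real.pi := by ring
    have e3 : y - 2 * Real.pi - ζ = (y - ζ) - 2 * Real.pi := by ring
    rw [e1, e3]
    have k1 : g ((y - ζ) + 2 * Real.pi) = chiB ((y - ζ) + 2 * Real.pi) * (E * C (y - ζ)) := by
      simp only [hg]
      rw [hCp]
    have k2 : g (y - ζ) = chiB (y - ζ) * C (y - ζ) := rfl
    have k3 : E * g ((y - ζ) - 2 * Real.pi) = chiB ((y - ζ) - 2 * Real.pi) * C (y - ζ) := by
      simp only [hg]
      have hc := hCp ((y - ζ) - 2 * Real.pi)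
      rw [sub_add_cancel] at hc
      rw [hc]
      ring
    have hsum : chiB ((y - ζ) + 2 * Real.pi) + chiB (y - ζ) + chiB ((y - ζ) - 2 * Real.pi) = 1 :=
      chiB_sum (by linarith) (by linarith)
        (fun hc => hne1 (by linarith)) (fun hc => hne2 (by linarith))
    linear_combination (-(E' * B ζ)) * k1 - (B ζ * chiB ((y - ζ) + 2 * Real.pi) * C (y - ζ)) * hEne
      - (B ζ) * k2 - (B ζ) * k3 - (B ζ * C (y - ζ)) * hsum
  rw [key, intervalIntegral.integral_add (((II _).const_mul _).add (II _)) ((II _).const_mul _),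
    intervalIntegral.integral_add ((II _).const_mul _) (II _),
    intervalIntegral.integral_const_mul, intervalIntegral.integral_const_mul]
  rfl

theorem triple_convolution_decomposition (σ : ℝ) (A B C : ℝ → ℂ)
    (hAm : Measurable A) (hBm : Measurable B) (hCm : Measurable C)
    (hAb : ∃ M : ℝ, ∀ q, ‖A q‖ ≤ M) (hBb : ∃ M : ℝ, ∀ q, ‖B q‖ ≤ M)
    (hCb : ∃ M : ℝ, ∀ q, ‖C q‖ ≤ M)
    (hAp : ∀ q : ℝ, A (q + 2 * Real.pi) = Complex.exp (2 * Real.pi * Complex.I * σ) * A q)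
    (hBp : ∀ q : ℝ, B (q + 2 * Real.pi) = Complex.exp (2 * Real.pi * Complex.I * σ) * B q)
    (hCp : ∀ q : ℝ, C (q + 2 * Real.pi) = Complex.exp (2 * Real.pi * Complex.I * σ) * C q) :
    ∀ q : ℝ, chiB q * conv1 A (conv1 B C) q
      = chiB q * ∑ m ∈ Finset.Icc (-1 : ℤ) 1,
          Complex.exp (2 * Real.pi * Complex.I * m * σ)
            * conv1 A (conv1 B (fun x => chiB x * C x)) (q - 2 * m * Real.pi) := by
  intro q
  have hpi := Real.pi_pos
  by_cases hq : q ∈ Set.Icc (-Real.pi) Real.pi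
  swap
  · rw [chiB_of_not_mem hq]; ring
  rw [chiB_of_mem hq, one_mul, one_mul]
  obtain ⟨hq1, hq2⟩ := hq
  -- expand the sum
  have hIcc : Finset.Icc (-1 : ℤ) 1 = {-1, 0, 1} := by decide
  rw [hIcc, Finset.sum_insert (by decide), Finset.sum_insert (by decide), Finset.sum_singleton]
  set g := fun x => chiB x * C x with hgdef
  set h := conv1 B g with hhdef
  -- clean up coefficients and arguments
  have c0 : Complex.exp (2 * (Real.pi : ℂ) * Complex.I * ((0 : ℤ) : ℂ) * (σ : ℂ)) = 1 := by
    rw [show (2 * (Real.pi : ℂ) * Complex.I * ((0 : ℤ) : ℂ) * (σ : ℂ)) = 0 by push_cast; ring,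
      Complex.exp_zero]
  have cm1 : Complex.exp (2 * (Real.pi : ℂ) * Complex.I * ((-1 : ℤ) : ℂ) * (σ : ℂ))
      = Complex.exp (-(2 * Real.pi * Complex.I * σ)) := by
    congr 1
    push_cast
    ring
  have c1 : Complex.exp (2 * (Real.pi : ℂ) * Complex.I * ((1 : ℤ) : ℂ) * (σ : ℂ))
      = Complex.exp (2 * Real.pi * Complex.I * σ) := by
    congr 1
    push_cast
    ring
  have a0 : q - 2 * ((0 : ℤ) : ℝ) * Real.pi = q := by push_cast; ring
  have am1 : q - 2 * ((-1 : ℤ) : ℝ) * Real.pi = q + 2 * Real.pi := by push_cast; ring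
  have a1 : q - 2 * ((1 : ℤ) : ℝ) * Real.pi = q - 2 * Real.pi := by push_cast; ring
  rw [c0, cm1, c1, a0, am1, a1, one_mul]
  set E := Complex.exp (2 * Real.pi * Complex.I * σ) with hE
  set E' := Complex.exp (-(2 * Real.pi * Complex.I * σ)) with hE'
  -- boundedness and measurability facts
  obtain ⟨MA, hMA⟩ := hAb
  obtain ⟨MB, hMB⟩ := hBb
  obtain ⟨MC, hMC⟩ := hCb
  have hMA0 : 0 ≤ MA := le_trans (norm_nonneg _) (hMA 0)
  have hgm : Measurable g := measurable_chiB.mul hCm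
  have hgb : ∀ x, ‖g x‖ ≤ MC := by
    intro x
    calc ‖g x‖ = ‖chiB x‖ * ‖C x‖ := norm_mul _ _
      _ ≤ 1 * MC := mul_le_mul (norm_chiB_le x) (hMC x) (norm_nonneg _) zero_le_one
      _ = MC := one_mul _
  have hhm : Measurable h := measurable_conv1 hBm hgm
  have hhb : ∀ x, ‖h x‖ ≤ MB * MC * |Real.pi - (-Real.pi)| := fun x =>
    norm_conv1_le hMB hgb x
  have hbnd : ∀ c ξ : ℝ, ‖A ξ * h (c - ξ)‖ ≤ MA * (MB * MC * |Real.pi - (-Real.pi)|) := by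
    intro c ξ
    rw [norm_mul]
    exact mul_le_mul (hMA ξ) (hhb _) (norm_nonneg _) hMA0
  have II : ∀ c : ℝ, IntervalIntegrable (fun ξ => A ξ * h (c - ξ)) volume (-Real.pi) Real.pi :=
    fun c => intervalIntegrable_of_bounded
      (hAm.mul (hhm.comp (measurable_const.sub measurable_id))) (hbnd c) _ _
  have key : ∀ ξ ∈ Set.uIcc (-Real.pi) Real.pi,
      A ξ * conv1 B C (q - ξ) =
        E' * (A ξ * h (q + 2 * Real.pi - ξ)) + A ξ * h (q - ξ)
          + E * (A ξ * h (q - 2 * Real.pi - ξ)) := by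
    intro ξ hξ
    rw [Set.uIcc_of_le (by linarith : -Real.pi ≤ Real.pi)] at hξ
    obtain ⟨hξ1, hξ2⟩ := hξ
    have hstep := inner_step σ B C hBm hCm ⟨MB, hMB⟩ ⟨MC, hMC⟩ hCp
      (y := q - ξ) (by linarith) (by linarith)
    rw [hstep,
      show q + 2 * Real.pi - ξ = (q - ξ) + 2 * Real.pi by ring,
      show q - 2 * Real.pi - ξ = (q - ξ) - 2 * Real.pi by ring]
    ring
  calc conv1 A (conv1 B C) q
      = ∫ ξ in (-Real.pi)..Real.pi,
          (E' * (A ξ * h (q + 2 * Real.pi - ξ)) + A ξ * h (q - ξ)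
            + E * (A ξ * h (q - 2 * Real.pi - ξ))) :=
        intervalIntegral.integral_congr key
    _ = E' * conv1 A h (q + 2 * Real.pi) + (conv1 A h q + E * conv1 A h (q - 2 * Real.pi)) := by
        rw [intervalIntegral.integral_add (((II _).const_mul _).add (II _)) ((II _).const_mul _),
          intervalIntegral.integral_add ((II _).const_mul _) (II _),
          intervalIntegral.integral_const_mul, intervalIntegral.integral_const_mul]
        exact add_assoc _ _ _
end

section
/- Fix a > 1/2 and constants c₁, c₂ > 0, and let c₃ = min(c₁, c₂). If f₁, f₂ : ℝ → ℂ satisfy e^{c₁|Q|} f₁(Q) ∈ L^{2,a}(ℝ) and e^{c₂|Q|} f₂(Q) ∈ L^{2,a}(ℝ), then e^{c₃|Q|} (f₁ * f₂)(Q) ∈ L^{2,a}(ℝ) with ‖e^{c₃|·|}(f₁*f₂)‖_{L^{2,a}} ≤ C ‖e^{c₃|·|} f₁‖_{L^{2,a}} ‖e^{c₃|·|} f₂‖_{L^{2,a}}. -/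
open MeasureTheory ENNReal

/-- Convolution on ℝ. -/
noncomputable def convR (f g : ℝ → ℂ) (q : ℝ) : ℂ :=
  ∫ ξ : ℝ, f ξ * g (q - ξ)

namespace ExpConvAux

lemma sq_half (x : ℝ≥0∞) : (x ^ (1/2 : ℝ)) ^ 2 = x := by
  rw [← ENNReal.rpow_two, ← ENNReal.rpow_mul]; norm_num

lemma half_mul_self (x : ℝ≥0∞) : x ^ (1/2 : ℝ) * x ^ (1/2 : ℝ) = x := by
  rw [← ENNReal.rpow_add_of_nonneg _ _ (by norm_num) (by norm_num)]; norm_num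

lemma lintCS (f g : ℝ → ℝ≥0∞) (hf : AEMeasurable f) (hg : AEMeasurable g) :
    ∫⁻ x, f x * g x ≤ (∫⁻ x, f x ^ 2) ^ (1/2 : ℝ) * (∫⁻ x, g x ^ 2) ^ (1/2 : ℝ) := by
  have h := ENNReal.lintegral_mul_le_Lp_mul_Lq (volume : Measure ℝ)
    (p := 2) (q := 2) ⟨by norm_num, by norm_num, by norm_num⟩ hf hg
  simpa [ENNReal.rpow_two] using h

lemma lintegral_reflect (f : ℝ → ℝ≥0∞) (hf : Measurable f) (Q : ℝ) :
    ∫⁻ ξ, f (Q - ξ) = ∫⁻ ξ, f ξ := by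
  have h1 : ∫⁻ ξ, f (Q + ξ) = ∫⁻ ξ, f ξ := lintegral_add_left_eq_self f Q
  have h2 := (Measure.measurePreserving_neg (volume : Measure ℝ)).lintegral_comp
    (f := fun ξ => f (Q + ξ)) (hf.comp (measurable_const.add measurable_id))
  simp only [← sub_eq_add_neg] at h2
  rw [← h1, ← h2]

lemma young2 (k g : ℝ → ℝ≥0∞) (hk : Measurable k) (hg : Measurable g) :
    ∫⁻ Q, (∫⁻ ξ, k ξ * g (Q - ξ)) ^ 2 ≤ (∫⁻ ξ, k ξ) ^ 2 * ∫⁻ ξ, g ξ ^ 2 := by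
  have pt : ∀ Q : ℝ, (∫⁻ ξ, k ξ * g (Q - ξ)) ^ 2
      ≤ (∫⁻ ξ, k ξ) * ∫⁻ ξ, k ξ * g (Q - ξ) ^ 2 := by
    intro Q
    have hmeas : Measurable fun ξ : ℝ => g (Q - ξ) :=
      hg.comp (measurable_const.sub measurable_id)
    have h1 : (∫⁻ ξ, k ξ * g (Q - ξ))
        ≤ (∫⁻ ξ, k ξ) ^ (1/2 : ℝ) * (∫⁻ ξ, k ξ * g (Q - ξ) ^ 2) ^ (1/2 : ℝ) := by
      have hcs := lintCS (fun ξ => k ξ ^ (1/2 : ℝ)) (fun ξ => k ξ ^ (1/2 : ℝ) * g (Q - ξ))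
        (hk.pow_const _).aemeasurable ((hk.pow_const _).mul hmeas).aemeasurable
      calc ∫⁻ ξ, k ξ * g (Q - ξ)
          = ∫⁻ ξ, k ξ ^ (1/2 : ℝ) * (k ξ ^ (1/2 : ℝ) * g (Q - ξ)) := by
            refine lintegral_congr fun ξ => ?_
            rw [← mul_assoc, half_mul_self]
        _ ≤ (∫⁻ ξ, (k ξ ^ (1/2 : ℝ)) ^ 2) ^ (1/2 : ℝ)
            * (∫⁻ ξ, (k ξ ^ (1/2 : ℝ) * g (Q - ξ)) ^ 2) ^ (1/2 : ℝ) := hcs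
        _ = (∫⁻ ξ, k ξ) ^ (1/2 : ℝ) * (∫⁻ ξ, k ξ * g (Q - ξ) ^ 2) ^ (1/2 : ℝ) := by
            congr 2
            · exact lintegral_congr fun ξ => sq_half _
            · refine lintegral_congr fun ξ => ?_
              rw [mul_pow, sq_half]
    calc (∫⁻ ξ, k ξ * g (Q - ξ)) ^ 2
        ≤ ((∫⁻ ξ, k ξ) ^ (1/2 : ℝ) * (∫⁻ ξ, k ξ * g (Q - ξ) ^ 2) ^ (1/2 : ℝ)) ^ 2 :=
          pow_le_pow_left' h1 2
      _ = (∫⁻ ξ, k ξ) * ∫⁻ ξ, k ξ * g (Q - ξ) ^ 2 := by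
          rw [mul_pow, sq_half, sq_half]
  have hprod : Measurable fun z : ℝ × ℝ => k z.2 * g (z.1 - z.2) ^ 2 :=
    (hk.comp measurable_snd).mul ((hg.comp (measurable_fst.sub measurable_snd)).pow_const 2)
  calc ∫⁻ Q, (∫⁻ ξ, k ξ * g (Q - ξ)) ^ 2
      ≤ ∫⁻ Q, (∫⁻ ξ, k ξ) * ∫⁻ ξ, k ξ * g (Q - ξ) ^ 2 := lintegral_mono pt
    _ = (∫⁻ ξ, k ξ) * ∫⁻ Q, ∫⁻ ξ, k ξ * g (Q - ξ) ^ 2 :=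
        lintegral_const_mul _ hprod.lintegral_prod_right'
    _ = (∫⁻ ξ, k ξ) * ∫⁻ ξ, ∫⁻ Q, k ξ * g (Q - ξ) ^ 2 := by
        rw [lintegral_lintegral_swap hprod.aemeasurable]
    _ = (∫⁻ ξ, k ξ) * ∫⁻ ξ, k ξ * ∫⁻ Q, g (Q - ξ) ^ 2 := by
        congr 1
        exact lintegral_congr fun ξ =>
          lintegral_const_mul _ ((hg.comp (measurable_id.sub measurable_const)).pow_const 2)
    _ = (∫⁻ ξ, k ξ) * ∫⁻ ξ, k ξ * ∫⁻ Q, g Q ^ 2 := by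
        congr 1
        refine lintegral_congr fun ξ => ?_
        congr 1
        exact lintegral_sub_right_eq_self (fun Q => g Q ^ 2) ξ
    _ = (∫⁻ ξ, k ξ) ^ 2 * ∫⁻ ξ, g ξ ^ 2 := by
        rw [lintegral_mul_const _ hk, sq, mul_assoc]

lemma young2' (k g : ℝ → ℝ≥0∞) (hk : Measurable k) (hg : Measurable g) :
    ∫⁻ Q, (∫⁻ ξ, g ξ * k (Q - ξ)) ^ 2 ≤ (∫⁻ ξ, k ξ) ^ 2 * ∫⁻ ξ, g ξ ^ 2 := by
  have h : ∀ Q : ℝ, (∫⁻ ξ, g ξ * k (Q - ξ)) = ∫⁻ ξ, k ξ * g (Q - ξ) := by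
    intro Q
    have := lintegral_reflect (fun t => k t * g (Q - t))
      ((hk).mul (hg.comp (measurable_const.sub measurable_id))) Q
    calc (∫⁻ ξ, g ξ * k (Q - ξ)) = ∫⁻ ξ, k (Q - ξ) * g (Q - (Q - ξ)) := by
          refine lintegral_congr fun ξ => ?_
          rw [show Q - (Q - ξ) = ξ by ring, mul_comm]
      _ = ∫⁻ ξ, k ξ * g (Q - ξ) := this
  simp_rw [h]
  exact young2 k g hk hg

lemma add_sq_le (x y : ℝ≥0∞) : (x + y) ^ 2 ≤ 4 * (x ^ 2 + y ^ 2) := by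
  rcases le_total x y with h | h
  · calc (x + y) ^ 2 ≤ (y + y) ^ 2 := by gcongr
      _ = 4 * y ^ 2 := by ring
      _ ≤ 4 * (x ^ 2 + y ^ 2) := by gcongr; exact le_add_self
  · calc (x + y) ^ 2 ≤ (x + x) ^ 2 := by gcongr
      _ = 4 * x ^ 2 := by ring
      _ ≤ 4 * (x ^ 2 + y ^ 2) := by gcongr; exact le_self_add

lemma peetre {b : ℝ} (hb : 0 ≤ b) (Q ξ : ℝ) :
    (1 + Q ^ 2) ^ b ≤ 4 ^ b * ((1 + ξ ^ 2) ^ b + (1 + (Q - ξ) ^ 2) ^ b) := by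
  have h4 : ((4 : ℝ)) ^ b ≥ 0 := Real.rpow_nonneg (by norm_num) b
  rcases le_total ((1 : ℝ) + ξ ^ 2) (1 + (Q - ξ) ^ 2) with h | h
  · calc (1 + Q ^ 2) ^ b ≤ (4 * (1 + (Q - ξ) ^ 2)) ^ b := by
          refine Real.rpow_le_rpow (by positivity) ?_ hb
          nlinarith [sq_nonneg (Q - 2 * ξ)]
      _ = 4 ^ b * (1 + (Q - ξ) ^ 2) ^ b := Real.mul_rpow (by norm_num) (by positivity)
      _ ≤ 4 ^ b * ((1 + ξ ^ 2) ^ b + (1 + (Q - ξ) ^ 2) ^ b) := by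
          have := Real.rpow_nonneg (show (0:ℝ) ≤ 1 + ξ ^ 2 by positivity) b
          nlinarith [mul_nonneg h4 this]
  · calc (1 + Q ^ 2) ^ b ≤ (4 * (1 + ξ ^ 2)) ^ b := by
          refine Real.rpow_le_rpow (by positivity) ?_ hb
          nlinarith [sq_nonneg (Q - 2 * ξ)]
      _ = 4 ^ b * (1 + ξ ^ 2) ^ b := Real.mul_rpow (by norm_num) (by positivity)
      _ ≤ 4 ^ b * ((1 + ξ ^ 2) ^ b + (1 + (Q - ξ) ^ 2) ^ b) := by
          have := Real.rpow_nonneg (show (0:ℝ) ≤ 1 + (Q - ξ) ^ 2 by positivity) b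
          nlinarith [mul_nonneg h4 this]

lemma ofReal_inv_weight {a : ℝ} (ξ : ℝ) :
    ENNReal.ofReal ((1 + ξ ^ 2) ^ (-(a/2))) * ENNReal.ofReal ((1 + ξ ^ 2) ^ (a/2)) = 1 := by
  rw [← ENNReal.ofReal_mul (Real.rpow_nonneg (by positivity) _),
    ← Real.rpow_add (by positivity)]
  norm_num

lemma core {a : ℝ} (ha : a > 1/2) (φ₁ φ₂ : ℝ → ℝ≥0∞) (h₁ : Measurable φ₁)
    (h₂ : Measurable φ₂) :
    ∫⁻ Q, (ENNReal.ofReal ((1 + Q ^ 2) ^ (a/2)) * ∫⁻ ξ, φ₁ ξ * φ₂ (Q - ξ)) ^ 2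
      ≤ (8 * ENNReal.ofReal ((4:ℝ) ^ (a/2)) ^ 2 * ∫⁻ ξ, ENNReal.ofReal ((1 + ξ ^ 2) ^ (-a)))
        * ((∫⁻ ξ, (ENNReal.ofReal ((1 + ξ ^ 2) ^ (a/2)) * φ₁ ξ) ^ 2)
          * (∫⁻ ξ, (ENNReal.ofReal ((1 + ξ ^ 2) ^ (a/2)) * φ₂ ξ) ^ 2)) := by
  have hb : (0:ℝ) ≤ a / 2 := by linarith
  set u : ℝ → ℝ≥0∞ := fun q => ENNReal.ofReal ((1 + q ^ 2) ^ (a/2)) with hu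
  set v : ℝ → ℝ≥0∞ := fun q => ENNReal.ofReal ((1 + q ^ 2) ^ (-(a/2))) with hv
  set c4 : ℝ≥0∞ := ENNReal.ofReal ((4:ℝ) ^ (a/2)) with hc4
  have hum : Measurable u := by fun_prop
  have hvm : Measurable v := by fun_prop
  set g₁ : ℝ → ℝ≥0∞ := fun ξ => u ξ * φ₁ ξ with hg₁
  set g₂ : ℝ → ℝ≥0∞ := fun ξ => u ξ * φ₂ ξ with hg₂
  have hg₁m : Measurable g₁ := hum.mul h₁
  have hg₂m : Measurable g₂ := hum.mul h₂
  set T₁ : ℝ → ℝ≥0∞ := fun Q => ∫⁻ ξ, g₁ ξ * φ₂ (Q - ξ) with hT₁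
  set T₂ : ℝ → ℝ≥0∞ := fun Q => ∫⁻ ξ, φ₁ ξ * g₂ (Q - ξ) with hT₂
  have hT₁m : Measurable T₁ := by
    apply Measurable.lintegral_prod_right'
      (f := fun z : ℝ × ℝ => g₁ z.2 * φ₂ (z.1 - z.2))
    exact (hg₁m.comp measurable_snd).mul (h₂.comp (measurable_fst.sub measurable_snd))
  have hT₂m : Measurable T₂ := by
    apply Measurable.lintegral_prod_right'
      (f := fun z : ℝ × ℝ => φ₁ z.2 * g₂ (z.1 - z.2))
    exact (h₁.comp measurable_snd).mul (hg₂m.comp (measurable_fst.sub measurable_snd))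
  -- Peetre pointwise bound
  have hpeetre : ∀ Q ξ : ℝ, u Q ≤ c4 * (u ξ + u (Q - ξ)) := by
    intro Q ξ
    have h := peetre hb Q ξ
    calc u Q ≤ ENNReal.ofReal ((4:ℝ) ^ (a/2)
        * ((1 + ξ ^ 2) ^ (a/2) + (1 + (Q - ξ) ^ 2) ^ (a/2))) := ENNReal.ofReal_le_ofReal h
      _ = c4 * (u ξ + u (Q - ξ)) := by
          rw [ENNReal.ofReal_mul (Real.rpow_nonneg (by norm_num) _),
            ENNReal.ofReal_add (Real.rpow_nonneg (by positivity) _)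
              (Real.rpow_nonneg (by positivity) _)]
  have pt : ∀ Q : ℝ, u Q * ∫⁻ ξ, φ₁ ξ * φ₂ (Q - ξ) ≤ c4 * (T₁ Q + T₂ Q) := by
    intro Q
    calc u Q * ∫⁻ ξ, φ₁ ξ * φ₂ (Q - ξ)
        = ∫⁻ ξ, u Q * (φ₁ ξ * φ₂ (Q - ξ)) :=
          (lintegral_const_mul' _ _ ENNReal.ofReal_ne_top).symm
      _ ≤ ∫⁻ ξ, c4 * (g₁ ξ * φ₂ (Q - ξ) + φ₁ ξ * g₂ (Q - ξ)) := by
          refine lintegral_mono fun ξ => ?_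
          calc u Q * (φ₁ ξ * φ₂ (Q - ξ))
              ≤ (c4 * (u ξ + u (Q - ξ))) * (φ₁ ξ * φ₂ (Q - ξ)) :=
                mul_le_mul_left (hpeetre Q ξ) _
            _ = c4 * (g₁ ξ * φ₂ (Q - ξ) + φ₁ ξ * g₂ (Q - ξ)) := by
                simp only [hg₁, hg₂]; ring
      _ = c4 * ∫⁻ ξ, (g₁ ξ * φ₂ (Q - ξ) + φ₁ ξ * g₂ (Q - ξ)) :=
          lintegral_const_mul' _ _ ENNReal.ofReal_ne_top
      _ = c4 * (T₁ Q + T₂ Q) := by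
          rw [lintegral_add_left (f := fun ξ => g₁ ξ * φ₂ (Q - ξ)) (by fun_prop)]
  -- the L¹ bound on φᵢ
  have hL1 : ∀ (φ : ℝ → ℝ≥0∞), Measurable φ →
      (∫⁻ ξ, φ ξ) ^ 2 ≤ (∫⁻ ξ, ENNReal.ofReal ((1 + ξ ^ 2) ^ (-a)))
        * ∫⁻ ξ, (u ξ * φ ξ) ^ 2 := by
    intro φ hφ
    have hfac : ∀ ξ : ℝ, φ ξ = v ξ * (u ξ * φ ξ) := by
      intro ξ
      rw [← mul_assoc, hv, hu]
      simp only []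
      rw [ofReal_inv_weight, one_mul]
    have hcs : (∫⁻ ξ, φ ξ)
        ≤ (∫⁻ ξ, v ξ ^ 2) ^ (1/2:ℝ) * (∫⁻ ξ, (u ξ * φ ξ) ^ 2) ^ (1/2:ℝ) := by
      calc (∫⁻ ξ, φ ξ) = ∫⁻ ξ, v ξ * (u ξ * φ ξ) := lintegral_congr hfac
        _ ≤ _ := lintCS _ _ hvm.aemeasurable (hum.mul hφ).aemeasurable
    have hv2 : ∀ ξ : ℝ, v ξ ^ 2 = ENNReal.ofReal ((1 + ξ ^ 2) ^ (-a)) := by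
      intro ξ
      rw [hv]
      simp only []
      rw [← ENNReal.ofReal_pow (Real.rpow_nonneg (by positivity) _),
        ← Real.rpow_natCast ((1 + ξ^2 : ℝ) ^ (-(a/2))) 2, ← Real.rpow_mul (by positivity)]
      norm_num
    calc (∫⁻ ξ, φ ξ) ^ 2
        ≤ ((∫⁻ ξ, v ξ ^ 2) ^ (1/2:ℝ) * (∫⁻ ξ, (u ξ * φ ξ) ^ 2) ^ (1/2:ℝ)) ^ 2 :=
          pow_le_pow_left' hcs 2
      _ = (∫⁻ ξ, v ξ ^ 2) * ∫⁻ ξ, (u ξ * φ ξ) ^ 2 := by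
          rw [mul_pow, sq_half, sq_half]
      _ = (∫⁻ ξ, ENNReal.ofReal ((1 + ξ ^ 2) ^ (-a))) * ∫⁻ ξ, (u ξ * φ ξ) ^ 2 := by
          rw [lintegral_congr hv2]
  set Ia : ℝ≥0∞ := ∫⁻ ξ, ENNReal.ofReal ((1 + ξ ^ 2) ^ (-a)) with hIa
  set A₁ : ℝ≥0∞ := ∫⁻ ξ, g₁ ξ ^ 2 with hA₁
  set A₂ : ℝ≥0∞ := ∫⁻ ξ, g₂ ξ ^ 2 with hA₂
  have hY₁ : ∫⁻ Q, T₁ Q ^ 2 ≤ Ia * A₂ * A₁ := by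
    calc ∫⁻ Q, T₁ Q ^ 2 ≤ (∫⁻ ξ, φ₂ ξ) ^ 2 * ∫⁻ ξ, g₁ ξ ^ 2 := young2' φ₂ g₁ h₂ hg₁m
      _ ≤ (Ia * A₂) * A₁ := mul_le_mul_left (hL1 φ₂ h₂) _
  have hY₂ : ∫⁻ Q, T₂ Q ^ 2 ≤ Ia * A₁ * A₂ := by
    calc ∫⁻ Q, T₂ Q ^ 2 ≤ (∫⁻ ξ, φ₁ ξ) ^ 2 * ∫⁻ ξ, g₂ ξ ^ 2 := young2 φ₁ g₂ h₁ hg₂m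
      _ ≤ (Ia * A₁) * A₂ := mul_le_mul_left (hL1 φ₁ h₁) _
  calc ∫⁻ Q, (u Q * ∫⁻ ξ, φ₁ ξ * φ₂ (Q - ξ)) ^ 2
      ≤ ∫⁻ Q, (c4 * (T₁ Q + T₂ Q)) ^ 2 :=
        lintegral_mono fun Q => pow_le_pow_left' (pt Q) 2
    _ ≤ ∫⁻ Q, (c4 ^ 2 * 4) * (T₁ Q ^ 2 + T₂ Q ^ 2) := by
        refine lintegral_mono fun Q => ?_
        rw [mul_pow, mul_assoc]
        exact mul_le_mul_right (add_sq_le _ _) _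
    _ = (c4 ^ 2 * 4) * ((∫⁻ Q, T₁ Q ^ 2) + ∫⁻ Q, T₂ Q ^ 2) := by
        rw [lintegral_const_mul' _ _
          (ENNReal.mul_ne_top (ENNReal.pow_ne_top ENNReal.ofReal_ne_top) (by simp)),
          lintegral_add_left (hT₁m.pow_const 2)]
    _ ≤ (c4 ^ 2 * 4) * ((Ia * A₂ * A₁) + Ia * A₁ * A₂) :=
        mul_le_mul_right (add_le_add hY₁ hY₂) _
    _ = (8 * c4 ^ 2 * Ia) * (A₁ * A₂) := by ring


lemma ofReal_weight_sq {a : ℝ} (Q x : ℝ) (hx : 0 ≤ x) :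
    ENNReal.ofReal ((1 + Q ^ 2) ^ a * x ^ 2)
      = (ENNReal.ofReal ((1 + Q ^ 2) ^ (a/2)) * ENNReal.ofReal x) ^ 2 := by
  have h1 : ((1 + Q ^ 2 : ℝ) ^ (a/2)) ^ 2 = (1 + Q ^ 2) ^ a := by
    rw [← Real.rpow_natCast ((1 + Q ^ 2 : ℝ) ^ (a/2)) 2, ← Real.rpow_mul (by positivity)]
    norm_num
  rw [← ENNReal.ofReal_mul (Real.rpow_nonneg (by positivity) _),
    ← ENNReal.ofReal_pow (mul_nonneg (Real.rpow_nonneg (by positivity) _) hx),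
    mul_pow, h1]

end ExpConvAux

open ExpConvAux in
theorem exp_weighted_convolution_bound (a c₁ c₂ : ℝ) (ha : a > 1 / 2)
    (hc₁ : 0 < c₁) (hc₂ : 0 < c₂) :
    ∃ C > 0, ∀ f₁ f₂ : ℝ → ℂ, Measurable f₁ → Measurable f₂ →
      Integrable (fun Q => (1 + Q ^ 2) ^ a * (Real.exp (c₁ * |Q|) * ‖f₁ Q‖) ^ 2) →
      Integrable (fun Q => (1 + Q ^ 2) ^ a * (Real.exp (c₂ * |Q|) * ‖f₂ Q‖) ^ 2) →
      Integrable (fun Q => (1 + Q ^ 2) ^ a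
          * (Real.exp (min c₁ c₂ * |Q|) * ‖convR f₁ f₂ Q‖) ^ 2) ∧
      (∫ Q, (1 + Q ^ 2) ^ a * (Real.exp (min c₁ c₂ * |Q|) * ‖convR f₁ f₂ Q‖) ^ 2) ^ (1/2 : ℝ)
        ≤ C * (∫ Q, (1 + Q ^ 2) ^ a * (Real.exp (min c₁ c₂ * |Q|) * ‖f₁ Q‖) ^ 2) ^ (1/2 : ℝ)
            * (∫ Q, (1 + Q ^ 2) ^ a * (Real.exp (min c₁ c₂ * |Q|) * ‖f₂ Q‖) ^ 2) ^ (1/2 : ℝ) := by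
  -- integrability of the inverse weight
  have hIaInt : Integrable (fun ξ : ℝ => ((1:ℝ) + ξ ^ 2) ^ (-a)) := by
    have h := integrable_rpow_neg_one_add_norm_sq (E := ℝ) (μ := volume) (r := 2 * a)
      (by simpa using (by linarith : (1:ℝ) < 2 * a))
    have heq : ∀ ξ : ℝ, ((1:ℝ) + ‖ξ‖ ^ 2) ^ (-(2*a) / 2) = ((1:ℝ) + ξ ^ 2) ^ (-a) := by
      intro ξ
      rw [Real.norm_eq_abs, sq_abs]
      congr 1
      ring
    simpa only [heq] using h
  set Ia : ℝ≥0∞ := ∫⁻ ξ, ENNReal.ofReal ((1 + ξ ^ 2) ^ (-a)) with hIadef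
  have hIa_ne_top : Ia ≠ ⊤ := by
    have h := hIaInt.hasFiniteIntegral
    rw [hasFiniteIntegral_iff_ofReal
      (ae_of_all _ fun ξ => Real.rpow_nonneg (by positivity) _)] at h
    exact h.ne
  set K : ℝ := 8 * ((4:ℝ) ^ (a/2)) ^ 2 * Ia.toReal with hKdef
  have hK0 : 0 ≤ K := by
    apply mul_nonneg (mul_nonneg (by norm_num) (sq_nonneg _)) ENNReal.toReal_nonneg
  refine ⟨K ^ (1/2:ℝ) + 1,
    add_pos_of_nonneg_of_pos (Real.rpow_nonneg hK0 _) one_pos, ?_⟩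
  intro f₁ f₂ hf₁ hf₂ hint₁ hint₂
  set c₃ : ℝ := min c₁ c₂ with hc₃def
  have hc₃ : 0 < c₃ := lt_min hc₁ hc₂
  have hc₃₁ : c₃ ≤ c₁ := min_le_left _ _
  have hc₃₂ : c₃ ≤ c₂ := min_le_right _ _
  set φ₁ : ℝ → ℝ≥0∞ := fun ξ => ENNReal.ofReal (Real.exp (c₃ * |ξ|) * ‖f₁ ξ‖) with hφ₁
  set φ₂ : ℝ → ℝ≥0∞ := fun ξ => ENNReal.ofReal (Real.exp (c₃ * |ξ|) * ‖f₂ ξ‖) with hφ₂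
  have hφ₁m : Measurable φ₁ := by fun_prop
  have hφ₂m : Measurable φ₂ := by fun_prop
  have hconvm : Measurable (convR f₁ f₂) := by
    have h : StronglyMeasurable fun p : ℝ × ℝ => f₁ p.2 * f₂ (p.1 - p.2) :=
      ((hf₁.comp measurable_snd).mul
        (hf₂.comp (measurable_fst.sub measurable_snd))).stronglyMeasurable
    exact h.integral_prod_right'.measurable
  set A₁ : ℝ≥0∞ := ∫⁻ ξ, (ENNReal.ofReal ((1 + ξ ^ 2) ^ (a/2)) * φ₁ ξ) ^ 2 with hA₁def
  set A₂ : ℝ≥0∞ := ∫⁻ ξ, (ENNReal.ofReal ((1 + ξ ^ 2) ^ (a/2)) * φ₂ ξ) ^ 2 with hA₂def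
  -- relate Aᵢ to ofReal of the weighted integrands
  have hA₁eq : A₁ = ∫⁻ ξ, ENNReal.ofReal
      ((1 + ξ ^ 2) ^ a * (Real.exp (c₃ * |ξ|) * ‖f₁ ξ‖) ^ 2) := by
    refine (lintegral_congr fun ξ => ?_).symm
    exact ofReal_weight_sq ξ _ (by positivity)
  have hA₂eq : A₂ = ∫⁻ ξ, ENNReal.ofReal
      ((1 + ξ ^ 2) ^ a * (Real.exp (c₃ * |ξ|) * ‖f₂ ξ‖) ^ 2) := by
    refine (lintegral_congr fun ξ => ?_).symm
    exact ofReal_weight_sq ξ _ (by positivity)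
  -- finiteness of Aᵢ by comparison with the hypotheses
  have hA_ne_top : ∀ (c : ℝ) (f : ℝ → ℂ), c₃ ≤ c →
      Integrable (fun Q => (1 + Q ^ 2) ^ a * (Real.exp (c * |Q|) * ‖f Q‖) ^ 2) →
      (∫⁻ ξ, ENNReal.ofReal
        ((1 + ξ ^ 2) ^ a * (Real.exp (c₃ * |ξ|) * ‖f ξ‖) ^ 2)) ≠ ⊤ := by
    intro c f hc hint
    have h := hint.hasFiniteIntegral
    rw [hasFiniteIntegral_iff_ofReal (ae_of_all _ fun Q => by positivity)] at h
    refine (lt_of_le_of_lt (lintegral_mono fun ξ => ENNReal.ofReal_le_ofReal ?_) h).ne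
    have hE : Real.exp (c₃ * |ξ|) ≤ Real.exp (c * |ξ|) :=
      Real.exp_le_exp.mpr (mul_le_mul_of_nonneg_right hc (abs_nonneg _))
    have := pow_le_pow_left₀ (by positivity)
      (mul_le_mul_of_nonneg_right hE (norm_nonneg (f ξ))) 2
    exact mul_le_mul_of_nonneg_left this (by positivity)
  have hA₁top : A₁ ≠ ⊤ := by rw [hA₁eq]; exact hA_ne_top c₁ f₁ hc₃₁ hint₁
  have hA₂top : A₂ ≠ ⊤ := by rw [hA₂eq]; exact hA_ne_top c₂ f₂ hc₃₂ hint₂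
  -- the pointwise bound on the convolution
  have hptconv : ∀ Q : ℝ, ENNReal.ofReal (Real.exp (c₃ * |Q|) * ‖convR f₁ f₂ Q‖)
      ≤ ∫⁻ ξ, φ₁ ξ * φ₂ (Q - ξ) := by
    intro Q
    have hnorm : ENNReal.ofReal ‖convR f₁ f₂ Q‖
        ≤ ∫⁻ ξ, ENNReal.ofReal (‖f₁ ξ‖ * ‖f₂ (Q - ξ)‖) := by
      rw [ofReal_norm]
      calc (‖convR f₁ f₂ Q‖ₑ)
          ≤ ∫⁻ ξ, ‖f₁ ξ * f₂ (Q - ξ)‖ₑ := enorm_integral_le_lintegral_enorm _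
        _ = ∫⁻ ξ, ENNReal.ofReal (‖f₁ ξ‖ * ‖f₂ (Q - ξ)‖) := by
            refine lintegral_congr fun ξ => ?_
            rw [← ofReal_norm, norm_mul]
    calc ENNReal.ofReal (Real.exp (c₃ * |Q|) * ‖convR f₁ f₂ Q‖)
        = ENNReal.ofReal (Real.exp (c₃ * |Q|)) * ENNReal.ofReal ‖convR f₁ f₂ Q‖ :=
          ENNReal.ofReal_mul (Real.exp_nonneg _)
      _ ≤ ENNReal.ofReal (Real.exp (c₃ * |Q|))
          * ∫⁻ ξ, ENNReal.ofReal (‖f₁ ξ‖ * ‖f₂ (Q - ξ)‖) := mul_le_mul_right hnorm _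
      _ = ∫⁻ ξ, ENNReal.ofReal (Real.exp (c₃ * |Q|))
          * ENNReal.ofReal (‖f₁ ξ‖ * ‖f₂ (Q - ξ)‖) :=
          (lintegral_const_mul' _ _ ENNReal.ofReal_ne_top).symm
      _ ≤ ∫⁻ ξ, φ₁ ξ * φ₂ (Q - ξ) := by
          refine lintegral_mono fun ξ => ?_
          rw [← ENNReal.ofReal_mul (Real.exp_nonneg _),
            ← ENNReal.ofReal_mul (by positivity)]
          refine ENNReal.ofReal_le_ofReal ?_
          have habs : |Q| ≤ |ξ| + |Q - ξ| := by
            calc |Q| = |ξ + (Q - ξ)| := by ring_nf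
              _ ≤ |ξ| + |Q - ξ| := abs_add_le _ _
          have hE : Real.exp (c₃ * |Q|)
              ≤ Real.exp (c₃ * |ξ|) * Real.exp (c₃ * |Q - ξ|) := by
            rw [← Real.exp_add]
            refine Real.exp_le_exp.mpr ?_
            have := mul_le_mul_of_nonneg_left habs hc₃.le
            rw [mul_add] at this
            linarith
          calc Real.exp (c₃ * |Q|) * (‖f₁ ξ‖ * ‖f₂ (Q - ξ)‖)
              ≤ (Real.exp (c₃ * |ξ|) * Real.exp (c₃ * |Q - ξ|))
                * (‖f₁ ξ‖ * ‖f₂ (Q - ξ)‖) :=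
                mul_le_mul_of_nonneg_right hE (by positivity)
            _ = (Real.exp (c₃ * |ξ|) * ‖f₁ ξ‖)
                * (Real.exp (c₃ * |Q - ξ|) * ‖f₂ (Q - ξ)‖) := by ring
  -- the main lintegral bound
  set L : ℝ≥0∞ := ∫⁻ Q, ENNReal.ofReal
    ((1 + Q ^ 2) ^ a * (Real.exp (c₃ * |Q|) * ‖convR f₁ f₂ Q‖) ^ 2) with hLdef
  set B : ℝ≥0∞ := (8 * ENNReal.ofReal ((4:ℝ) ^ (a/2)) ^ 2 * Ia) * (A₁ * A₂) with hBdef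
  have hLB : L ≤ B := by
    calc L = ∫⁻ Q, (ENNReal.ofReal ((1 + Q ^ 2) ^ (a/2))
          * ENNReal.ofReal (Real.exp (c₃ * |Q|) * ‖convR f₁ f₂ Q‖)) ^ 2 :=
        lintegral_congr fun Q => ofReal_weight_sq Q _ (by positivity)
      _ ≤ ∫⁻ Q, (ENNReal.ofReal ((1 + Q ^ 2) ^ (a/2)) * ∫⁻ ξ, φ₁ ξ * φ₂ (Q - ξ)) ^ 2 := by
          refine lintegral_mono fun Q => ?_
          exact pow_le_pow_left' (mul_le_mul_right (hptconv Q) _) 2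
      _ ≤ B := core ha φ₁ φ₂ hφ₁m hφ₂m
  have hB_ne_top : B ≠ ⊤ := by
    apply ENNReal.mul_ne_top
    · exact ENNReal.mul_ne_top
        (ENNReal.mul_ne_top (by simp) (ENNReal.pow_ne_top ENNReal.ofReal_ne_top)) hIa_ne_top
    · exact ENNReal.mul_ne_top hA₁top hA₂top
  have hL_ne_top : L ≠ ⊤ := (lt_of_le_of_lt hLB hB_ne_top.lt_top).ne
  -- measurability of the real integrands
  have hFm : Measurable fun Q =>
      (1 + Q ^ 2) ^ a * (Real.exp (c₃ * |Q|) * ‖convR f₁ f₂ Q‖) ^ 2 := by fun_prop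
  have hR₁m : Measurable fun Q =>
      (1 + Q ^ 2) ^ a * (Real.exp (c₃ * |Q|) * ‖f₁ Q‖) ^ 2 := by fun_prop
  have hR₂m : Measurable fun Q =>
      (1 + Q ^ 2) ^ a * (Real.exp (c₃ * |Q|) * ‖f₂ Q‖) ^ 2 := by fun_prop
  have hFint : Integrable (fun Q =>
      (1 + Q ^ 2) ^ a * (Real.exp (c₃ * |Q|) * ‖convR f₁ f₂ Q‖) ^ 2) := by
    refine ⟨hFm.aestronglyMeasurable, ?_⟩
    rw [hasFiniteIntegral_iff_ofReal (ae_of_all _ fun Q => by positivity)]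
    exact hL_ne_top.lt_top
  refine ⟨hFint, ?_⟩
  -- convert the Bochner integrals to lintegrals
  have hFeq : (∫ Q, (1 + Q ^ 2) ^ a
      * (Real.exp (c₃ * |Q|) * ‖convR f₁ f₂ Q‖) ^ 2) = L.toReal := by
    rw [hLdef]
    exact integral_eq_lintegral_of_nonneg_ae (ae_of_all _ fun Q => by positivity)
      hFm.aestronglyMeasurable
  have hR₁eq : (∫ Q, (1 + Q ^ 2) ^ a
      * (Real.exp (c₃ * |Q|) * ‖f₁ Q‖) ^ 2) = A₁.toReal := by
    rw [hA₁eq]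
    exact integral_eq_lintegral_of_nonneg_ae (ae_of_all _ fun Q => by positivity)
      hR₁m.aestronglyMeasurable
  have hR₂eq : (∫ Q, (1 + Q ^ 2) ^ a
      * (Real.exp (c₃ * |Q|) * ‖f₂ Q‖) ^ 2) = A₂.toReal := by
    rw [hA₂eq]
    exact integral_eq_lintegral_of_nonneg_ae (ae_of_all _ fun Q => by positivity)
      hR₂m.aestronglyMeasurable
  rw [hFeq, hR₁eq, hR₂eq]
  -- final numeric estimate
  have hLK : L.toReal ≤ K * (A₁.toReal * A₂.toReal) := by
    have h := ENNReal.toReal_mono hB_ne_top hLB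
    rw [hBdef] at h
    rw [ENNReal.toReal_mul, ENNReal.toReal_mul, ENNReal.toReal_mul, ENNReal.toReal_pow,
      ENNReal.toReal_ofReal (Real.rpow_nonneg (by norm_num) _), ENNReal.toReal_mul] at h
    simpa [hKdef, mul_assoc] using h
  have h12 : (0:ℝ) ≤ 1/2 := by norm_num
  calc L.toReal ^ (1/2:ℝ) ≤ (K * (A₁.toReal * A₂.toReal)) ^ (1/2:ℝ) :=
      Real.rpow_le_rpow ENNReal.toReal_nonneg hLK h12
    _ = K ^ (1/2:ℝ) * (A₁.toReal ^ (1/2:ℝ) * A₂.toReal ^ (1/2:ℝ)) := by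
        rw [Real.mul_rpow hK0 (mul_nonneg ENNReal.toReal_nonneg ENNReal.toReal_nonneg),
          Real.mul_rpow ENNReal.toReal_nonneg ENNReal.toReal_nonneg]
    _ ≤ (K ^ (1/2:ℝ) + 1) * (A₁.toReal ^ (1/2:ℝ) * A₂.toReal ^ (1/2:ℝ)) := by
        refine mul_le_mul_of_nonneg_right (by linarith) ?_
        exact mul_nonneg (Real.rpow_nonneg ENNReal.toReal_nonneg _)
          (Real.rpow_nonneg ENNReal.toReal_nonneg _)
    _ = (K ^ (1/2:ℝ) + 1) * A₁.toReal ^ (1/2:ℝ) * A₂.toReal ^ (1/2:ℝ) := by ring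
end

section
/- Abel's identity: for any integers y ≥ 0 and nonzero constants c₁, c₂ with all terms defined, Σ_{x=0}^{y} (y choose x) (x+c₁)^{x-1} (y-x+c₂)^{y-x-1} = ((c₁+c₂)/(c₁c₂)) (y+c₁+c₂)^{y-1}. -/
open Finset
lemma findiff (m : ℕ) : ∀ i < m, ∀ x : ℝ,
    ∑ k ∈ range (m+1), (-1:ℝ)^k * (m.choose k) * (x+k)^i = 0 := by
  induction m with
  | zero => intro i hi; omega
  | succ m ih =>
    intro i hi x
    have key : ∑ k ∈ range (m+1+1), (-1:ℝ)^k * ((m+1).choose k) * (x+k)^i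
        = ∑ k ∈ range (m+1),
            (-1:ℝ)^k * (m.choose k) * ((x+k)^i - (x+(k+1:ℕ))^i) := by
      rw [Finset.sum_range_succ' (fun k => (-1:ℝ)^k * (((m+1).choose k : ℕ) : ℝ) * (x+k)^i) (m+1)]
      have h1 : ∀ k ∈ range (m+1),
          (-1:ℝ)^(k+1) * (((m+1).choose (k+1) : ℕ) : ℝ) * (x+(k+1:ℕ))^i
            = -((-1:ℝ)^k * (m.choose k) * (x+(k+1:ℕ))^i)
              + (-1:ℝ)^(k+1) * (m.choose (k+1)) * (x+(k+1:ℕ))^i := by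
        intro k _
        rw [Nat.choose_succ_succ]
        push_cast
        ring
      rw [Finset.sum_congr rfl h1, Finset.sum_add_distrib]
      have h2 : (∑ k ∈ range (m+1),
            (-1:ℝ)^(k+1) * (m.choose (k+1)) * (x+(k+1:ℕ))^i)
            + (-1:ℝ)^0 * (((m+1).choose 0 : ℕ):ℝ) * (x+(0:ℕ))^i
          = ∑ k ∈ range (m+1+1), (-1:ℝ)^k * (m.choose k) * (x+k)^i := by
        rw [Finset.sum_range_succ' (fun k => (-1:ℝ)^k * ((m.choose k : ℕ) : ℝ) * (x+k)^i) (m+1)]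
        simp
      rw [add_assoc, h2,
        Finset.sum_range_succ (fun k => (-1:ℝ)^k * ((m.choose k : ℕ) : ℝ) * (x+k)^i) (m+1)]
      simp only [Nat.choose_succ_self, Nat.cast_zero, mul_zero, zero_mul, add_zero]
      rw [← Finset.sum_add_distrib]
      exact Finset.sum_congr rfl (fun k _ => by ring)
    rw [key]
    rcases Nat.eq_zero_or_pos i with hi0 | hipos
    · simp [hi0]
    · have hbr : ∀ k ∈ range (m+1), (-1:ℝ)^k * (m.choose k) * ((x+k)^i - (x+(k+1:ℕ))^i)
          = -∑ t ∈ range i, (i.choose t : ℝ) * ((-1:ℝ)^k * (m.choose k) * (x+k)^t) := by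
        intro k _
        have hq : ((x+(k:ℝ))+1)^i
            = (x+(k:ℝ))^i + ∑ t ∈ range i, (x+(k:ℝ))^t * (i.choose t) := by
          rw [add_pow, Finset.sum_range_succ]
          simp [add_comm]
        have hcast : (x+((k+1:ℕ):ℝ))^i
            = (x+(k:ℝ))^i + ∑ t ∈ range i, (x+(k:ℝ))^t * (i.choose t) := by
          push_cast
          rw [show x+((k:ℝ)+1) = (x+(k:ℝ))+1 by ring]
          exact hq
        rw [hcast]
        have : (-1:ℝ)^k * (m.choose k)
              * ((x+(k:ℝ))^i - ((x+(k:ℝ))^i + ∑ t ∈ range i, (x+(k:ℝ))^t * (i.choose t)))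
            = -((-1:ℝ)^k * (m.choose k) * ∑ t ∈ range i, (x+(k:ℝ))^t * (i.choose t)) := by
          ring
        rw [this, Finset.mul_sum]
        congr 1
        exact Finset.sum_congr rfl (fun t _ => by ring)
      rw [Finset.sum_congr rfl hbr]
      rw [Finset.sum_neg_distrib, neg_eq_zero, Finset.sum_comm]
      apply Finset.sum_eq_zero
      intro t ht
      rw [← Finset.mul_sum, ih t (by simp at ht; omega) x, mul_zero]

lemma trichoose {n k j : ℕ} (h : k + j ≤ n) :
    n.choose k * (n - k).choose j = n.choose j * (n - j).choose k := by
  have h1 := Nat.choose_mul (n := n) (show k ≤ k + j by omega)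
  have h2 := Nat.choose_mul (n := n) (show j ≤ k + j by omega)
  have h3 : (k+j).choose k = (k+j).choose j := by
    rw [← Nat.choose_symm (show j ≤ k + j by omega)]; congr 1; omega
  rw [show k + j - k = j by omega] at h1
  rw [show k + j - j = k by omega] at h2
  rw [h3] at h1
  omega

lemma abel_aux (n : ℕ) (x y : ℝ) (hx : x ≠ 0) :
    ∑ k ∈ range (n+1), (n.choose k : ℝ) * (x * (x+k)^((k:ℤ)-1)) * (y+(n:ℝ)-k)^(n-k)
      = (x+y+n)^n := by
  have step1 : ∀ k ∈ range (n+1),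
      (n.choose k : ℝ) * (x * (x+k)^((k:ℤ)-1)) * (y+(n:ℝ)-k)^(n-k)
      = ∑ j ∈ range (n-k+1), (n.choose k : ℝ) * (x * (x+k)^((k:ℤ)-1)) *
          ((x+y+(n:ℝ))^j * (-(x+k))^(n-k-j) * (((n-k).choose j : ℕ) : ℝ)) := by
    intro k hk
    rw [← Finset.mul_sum, ← add_pow]
    congr 2
    ring
  rw [Finset.sum_congr rfl step1,
    Finset.sum_comm' (show ∀ k j, (k ∈ range (n+1) ∧ j ∈ range (n-k+1))
        ↔ (k ∈ range (n-j+1) ∧ j ∈ range (n+1)) by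
      intro k j; simp only [mem_range]; omega)]
  rw [Finset.sum_eq_single_of_mem n (mem_range.2 (Nat.lt_succ_self n))]
  · rw [Nat.sub_self, Finset.sum_range_one]
    simp only [Nat.cast_zero, add_zero, Nat.choose_zero_right, Nat.cast_one, one_mul,
      Nat.sub_zero, Nat.sub_self, pow_zero, mul_one, Nat.choose_self, zero_sub,
      zpow_neg_one]
    rw [mul_inv_cancel₀ hx, one_mul]
  · intro j hj hjn
    have hjm : j < n := by simp only [mem_range] at hj; omega
    set m := n - j with hm
    have hm1 : 1 ≤ m := by omega
    have perterm : ∀ k ∈ range (m+1),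
        (n.choose k : ℝ) * (x * (x+k)^((k:ℤ)-1)) *
          ((x+y+(n:ℝ))^j * (-(x+k))^(n-k-j) * (((n-k).choose j : ℕ) : ℝ))
        = ((n.choose j : ℝ) * (x+y+(n:ℝ))^j * x * (-1:ℝ)^m)
            * ((-1:ℝ)^k * (m.choose k) * (x+(k:ℝ))^(m-1)) := by
      intro k hk
      have hkm : k ≤ m := by simp only [mem_range] at hk; omega
      have hnkj : n - k - j = m - k := by omega
      have hch : ((n.choose k : ℝ) * (((n-k).choose j : ℕ) : ℝ))
          = (n.choose j : ℝ) * (m.choose k) := by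
        exact_mod_cast congrArg (Nat.cast (R := ℝ)) (trichoose (show k + j ≤ n by omega))
      have hsign : (-1:ℝ)^(m-k) = (-1:ℝ)^m * (-1:ℝ)^k := by
        have hmk : m + k = (m - k) + 2*k := by omega
        rw [← pow_add, hmk, pow_add, pow_mul]
        norm_num
      have hneg : (-(x+(k:ℝ)))^(m-k) = (-1:ℝ)^m * (-1:ℝ)^k * (x+(k:ℝ))^(m-k) := by
        rw [neg_pow, hsign]
      have hpow : x * (x+(k:ℝ))^((k:ℤ)-1) * (x+(k:ℝ))^(m-k) = x * (x+(k:ℝ))^(m-1) := by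
        cases k with
        | zero =>
          simp only [Nat.cast_zero, add_zero, Nat.sub_zero]
          have hxm : x^m = x * x^(m-1) := by
            rw [← pow_succ']; congr 1; omega
          rw [show ((0:ℤ) - 1) = -1 by norm_num, zpow_neg_one, mul_inv_cancel₀ hx, one_mul, hxm]
        | succ l =>
          rw [show ((l+1:ℕ):ℤ)-1 = (l:ℤ) by push_cast; ring, zpow_natCast, mul_assoc,
            ← pow_add, show l + (m - (l+1)) = m - 1 by omega]
      calc (n.choose k : ℝ) * (x * (x+k)^((k:ℤ)-1)) *
          ((x+y+(n:ℝ))^j * (-(x+k))^(n-k-j) * (((n-k).choose j : ℕ) : ℝ))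
          = ((n.choose k : ℝ) * (((n-k).choose j : ℕ) : ℝ)) * ((x+y+(n:ℝ))^j
              * ((-1:ℝ)^m * (-1:ℝ)^k)
              * (x * (x+(k:ℝ))^((k:ℤ)-1) * (x+(k:ℝ))^(m-k))) := by
            rw [hnkj, hneg]; ring
        _ = ((n.choose j : ℝ) * (m.choose k)) * ((x+y+(n:ℝ))^j
              * ((-1:ℝ)^m * (-1:ℝ)^k) * (x * (x+(k:ℝ))^(m-1))) := by rw [hpow, hch]
        _ = ((n.choose j : ℝ) * (x+y+(n:ℝ))^j * x * (-1:ℝ)^m)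
            * ((-1:ℝ)^k * (m.choose k) * (x+(k:ℝ))^(m-1)) := by ring
    rw [Finset.sum_congr rfl perterm, ← Finset.mul_sum,
      findiff m (m-1) (by omega) x, mul_zero]


/-- Abel's binomial identity. -/
theorem abel_identity (y : ℕ) (c₁ c₂ : ℝ) (hc₁ : c₁ ≠ 0) (hc₂ : c₂ ≠ 0)
    (hterms : ∀ x : ℕ, x ≤ y → ((x : ℝ) + c₁) ≠ 0 ∧ ((y : ℝ) - (x : ℝ) + c₂) ≠ 0)
    (hsum : (y : ℝ) + c₁ + c₂ ≠ 0) :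
    ∑ x ∈ Finset.range (y + 1),
        (y.choose x : ℝ) * ((x : ℝ) + c₁) ^ ((x : ℤ) - 1)
          * ((y : ℝ) - (x : ℝ) + c₂) ^ ((y : ℤ) - (x : ℤ) - 1)
      = ((c₁ + c₂) / (c₁ * c₂)) * ((y : ℝ) + c₁ + c₂) ^ ((y : ℤ) - 1) := by
  set n := y with hn
  set S := ∑ x ∈ Finset.range (n + 1),
      (n.choose x : ℝ) * ((x : ℝ) + c₁) ^ ((x : ℤ) - 1)
        * ((n : ℝ) - (x : ℝ) + c₂) ^ ((n : ℤ) - (x : ℤ) - 1) with hS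
  -- T2 : second Abel sum
  have habel2 : ∑ k ∈ range (n+1),
      (n.choose k : ℝ) * (c₁ * (c₁+k)^((k:ℤ)-1)) * (c₂+(n:ℝ)-k)^(n-k)
      = (c₁+c₂+(n:ℝ))^n := abel_aux n c₁ c₂ hc₁
  have habel1 : ∑ k ∈ range (n+1),
      (n.choose k : ℝ) * (c₂ * (c₂+k)^((k:ℤ)-1)) * (c₁+(n:ℝ)-k)^(n-k)
      = (c₂+c₁+(n:ℝ))^n := abel_aux n c₂ c₁ hc₂
  -- reflected version of habel1
  have hrefl : ∑ k ∈ range (n+1),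
      (n.choose (n-k) : ℝ) * (c₂ * (c₂+((n-k:ℕ):ℝ))^(((n-k:ℕ):ℤ)-1))
        * (c₁+(n:ℝ)-((n-k:ℕ):ℝ))^(n-(n-k))
      = (c₂+c₁+(n:ℝ))^n := by
    rw [← habel1]
    exact Finset.sum_range_reflect
      (fun k => (n.choose k : ℝ) * (c₂ * (c₂+(k:ℝ))^((k:ℤ)-1)) * (c₁+(n:ℝ)-(k:ℝ))^(n-k)) (n+1)
  -- evaluate the two auxiliary sums
  set T1 := ∑ k ∈ range (n+1),
      (n.choose k : ℝ) * ((k:ℝ)+c₁)^k * ((n:ℝ)-(k:ℝ)+c₂)^((n:ℤ)-(k:ℤ)-1) with hT1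
  set T2 := ∑ k ∈ range (n+1),
      (n.choose k : ℝ) * ((k:ℝ)+c₁)^((k:ℤ)-1) * ((n:ℝ)-(k:ℝ)+c₂)^(n-k) with hT2
  have hS2 : c₁ * T2 = (c₁+c₂+(n:ℝ))^n := by
    rw [← habel2, hT2, Finset.mul_sum]
    apply Finset.sum_congr rfl
    intro k hk
    rw [show c₁+(k:ℝ) = (k:ℝ)+c₁ by ring, show c₂+(n:ℝ)-(k:ℝ) = (n:ℝ)-(k:ℝ)+c₂ by ring]
    ring
  have hS1 : c₂ * T1 = (c₂+c₁+(n:ℝ))^n := by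
    rw [← hrefl, hT1, Finset.mul_sum]
    apply Finset.sum_congr rfl
    intro k hk
    have hkn : k ≤ n := by simp only [mem_range] at hk; omega
    rw [Nat.choose_symm hkn, show n-(n-k) = k by omega,
      (Nat.cast_sub hkn : ((n-k:ℕ):ℝ) = (n:ℝ)-(k:ℝ)),
      (Nat.cast_sub hkn : ((n-k:ℕ):ℤ) = (n:ℤ)-(k:ℤ)),
      show c₂+((n:ℝ)-(k:ℝ)) = (n:ℝ)-(k:ℝ)+c₂ by ring,
      show c₁+(n:ℝ)-((n:ℝ)-(k:ℝ)) = (k:ℝ)+c₁ by ring]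
    ring
  -- key splitting
  have key : ((n:ℝ)+c₁+c₂) * S = T1 + T2 := by
    rw [hS, hT1, hT2, Finset.mul_sum, ← Finset.sum_add_distrib]
    apply Finset.sum_congr rfl
    intro k hk
    have hkn : k ≤ n := by simp only [mem_range] at hk; omega
    obtain ⟨h1, h2⟩ := hterms k hkn
    have e1 : ((k:ℝ)+c₁) * ((k:ℝ)+c₁)^((k:ℤ)-1) = ((k:ℝ)+c₁)^(k:ℕ) := by
      rw [zpow_sub_one₀ h1, zpow_natCast]
      field_simp
    have e2 : ((n:ℝ)-(k:ℝ)+c₂) * ((n:ℝ)-(k:ℝ)+c₂)^((n:ℤ)-(k:ℤ)-1)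
        = ((n:ℝ)-(k:ℝ)+c₂)^(n-k:ℕ) := by
      rw [zpow_sub_one₀ h2, show (n:ℤ)-(k:ℤ) = ((n-k:ℕ):ℤ) by
        rw [(Nat.cast_sub hkn : ((n-k:ℕ):ℤ) = (n:ℤ)-(k:ℤ))], zpow_natCast]
      field_simp
    calc ((n:ℝ)+c₁+c₂) * ((n.choose k : ℝ) * ((k:ℝ)+c₁)^((k:ℤ)-1)
            * ((n:ℝ)-(k:ℝ)+c₂)^((n:ℤ)-(k:ℤ)-1))
        = (n.choose k : ℝ) * (((k:ℝ)+c₁) * ((k:ℝ)+c₁)^((k:ℤ)-1))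
            * ((n:ℝ)-(k:ℝ)+c₂)^((n:ℤ)-(k:ℤ)-1)
          + (n.choose k : ℝ) * ((k:ℝ)+c₁)^((k:ℤ)-1)
            * (((n:ℝ)-(k:ℝ)+c₂) * ((n:ℝ)-(k:ℝ)+c₂)^((n:ℤ)-(k:ℤ)-1)) := by ring
      _ = _ := by rw [e1, e2]
  -- conclude
  have final : ((n:ℝ)+c₁+c₂) * S
      = ((n:ℝ)+c₁+c₂) * (((c₁+c₂)/(c₁*c₂)) * ((n:ℝ)+c₁+c₂)^((n:ℤ)-1)) := by
    rw [key]
    have e1 : T1 = c₂⁻¹ * (c₂+c₁+(n:ℝ))^n := by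
      rw [← hS1, inv_mul_cancel_left₀ hc₂]
    have e2 : T2 = c₁⁻¹ * (c₁+c₂+(n:ℝ))^n := by
      rw [← hS2, inv_mul_cancel_left₀ hc₁]
    rw [e1, e2, zpow_sub_one₀ hsum, zpow_natCast]
    field_simp
    ring
  exact mul_left_cancel₀ hsum final
end

section
/- Let a > 1/2, let f ∈ L^{2,a}(ℝ) satisfy e^{C|q|}f(q) ∈ L^{2,a}(ℝ) for some C > 0, and let m = ±1 and α > 0. Then the shifted triple convolution restricted to the scaled Brillouin zone satisfies ‖χ_{[-π/α,π/α]}(Q) · (f*f*f)(Q - 2mπ/α)‖_{L^{2,a}(ℝ_Q)} ≤ C' e^{-Cπ/α} ‖e^{C|Q|}f(Q)‖³_{L^{2,a}(ℝ_Q)} for a constant C' depending only on a. -/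
open MeasureTheory
open scoped ENNReal

noncomputable def lconv (A B : ℝ → ℝ≥0∞) (q : ℝ) : ℝ≥0∞ := ∫⁻ ξ, A ξ * B (q - ξ)

lemma lconv_meas {A B : ℝ → ℝ≥0∞} (hA : Measurable A) (hB : Measurable B) :
    Measurable (lconv A B) := by
  apply Measurable.lintegral_prod_right (f := fun q ξ => A ξ * B (q - ξ))
  exact (hA.comp measurable_snd).mul (hB.comp (measurable_fst.sub measurable_snd))

lemma lint_shift {B : ℝ → ℝ≥0∞} (hB : Measurable B) (q : ℝ) :
    ∫⁻ ξ, B (q - ξ) = ∫⁻ ξ, B ξ :=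
  (Measure.measurePreserving_sub_left volume q).lintegral_comp hB

lemma lconv_comm {A B : ℝ → ℝ≥0∞} (hA : Measurable A) (hB : Measurable B) (q : ℝ) :
    lconv A B q = lconv B A q := by
  have h := lint_shift (B := fun ξ => A (q - ξ) * B ξ) (by
    exact (hA.comp (measurable_const.sub measurable_id)).mul hB) q
  simpa [lconv, sub_sub_cancel, mul_comm] using h

lemma lconv_integral {A B : ℝ → ℝ≥0∞} (hA : Measurable A) (hB : Measurable B) :
    ∫⁻ q, lconv A B q = (∫⁻ q, A q) * ∫⁻ q, B q := by
  unfold lconv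
  rw [lintegral_lintegral_swap (by
    exact ((hA.comp measurable_snd).mul (hB.comp (measurable_fst.sub measurable_snd))).aemeasurable)]
  calc ∫⁻ ξ, ∫⁻ q, A ξ * B (q - ξ) = ∫⁻ ξ, A ξ * ∫⁻ q, B (q - ξ) :=
        lintegral_congr fun ξ =>
          lintegral_const_mul _ (hB.comp (measurable_id.sub measurable_const))
    _ = ∫⁻ ξ, A ξ * ∫⁻ q, B q := by simp_rw [lintegral_sub_right_eq_self B]
    _ = (∫⁻ q, A q) * ∫⁻ q, B q := lintegral_mul_const _ hA

lemma ennreal_sq_rpow_half (x : ℝ≥0∞) : (x ^ (1/2 : ℝ)) ^ 2 = x := by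
  rw [← ENNReal.rpow_natCast (x ^ (1/2:ℝ)) 2, ← ENNReal.rpow_mul]
  norm_num

lemma ennreal_rpow_two (x : ℝ≥0∞) : x ^ (2:ℝ) = x ^ 2 := by
  rw [show (2:ℝ) = ((2:ℕ):ℝ) by norm_num, ENNReal.rpow_natCast]

lemma young_sq {A B : ℝ → ℝ≥0∞} (hA : Measurable A) (hB : Measurable B) :
    ∫⁻ q, (lconv A B q) ^ 2 ≤ (∫⁻ q, A q ^ 2) * (∫⁻ q, B q) ^ 2 := by
  have hBq : ∀ q : ℝ, Measurable fun ξ => B (q - ξ) := fun q =>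
    hB.comp (measurable_const.sub measurable_id)
  have key : ∀ q, (lconv A B q) ^ 2 ≤ (∫⁻ ξ, A ξ ^ 2 * B (q - ξ)) * ∫⁻ ξ, B (q - ξ) := by
    intro q
    have hcs := ENNReal.lintegral_mul_le_Lp_mul_Lq volume
      (Real.HolderConjugate.two_two : Real.HolderConjugate 2 2)
      (f := fun ξ => A ξ * (B (q - ξ)) ^ (1/2:ℝ))
      (g := fun ξ => (B (q - ξ)) ^ (1/2:ℝ))
      (by exact (hA.mul ((hBq q).pow_const _)).aemeasurable)
      (by exact ((hBq q).pow_const _).aemeasurable)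
    have h1 : ∫⁻ ξ, ((fun ξ => A ξ * (B (q - ξ)) ^ (1/2:ℝ)) * fun ξ => (B (q - ξ)) ^ (1/2:ℝ)) ξ
        = lconv A B q := by
      unfold lconv
      congr 1 with ξ
      simp only [Pi.mul_apply]
      rw [mul_assoc, ← sq, ennreal_sq_rpow_half]
    have h2 : ∀ ξ, (A ξ * (B (q - ξ)) ^ (1/2:ℝ)) ^ (2:ℝ) = A ξ ^ 2 * B (q - ξ) := by
      intro ξ
      rw [ENNReal.mul_rpow_of_nonneg _ _ (by norm_num : (0:ℝ) ≤ 2),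
        ennreal_rpow_two, ennreal_rpow_two, ennreal_sq_rpow_half]
    have h3 : ∀ ξ, ((B (q - ξ)) ^ (1/2:ℝ)) ^ (2:ℝ) = B (q - ξ) := by
      intro ξ
      rw [ennreal_rpow_two, ennreal_sq_rpow_half]
    rw [h1] at hcs
    simp_rw [h2, h3] at hcs
    calc (lconv A B q) ^ 2
        ≤ ((∫⁻ ξ, A ξ ^ 2 * B (q-ξ)) ^ (1/2:ℝ) * (∫⁻ ξ, B (q-ξ)) ^ (1/2:ℝ)) ^ 2 := by
          exact pow_le_pow_left' hcs 2
      _ = (∫⁻ ξ, A ξ ^ 2 * B (q - ξ)) * ∫⁻ ξ, B (q - ξ) := by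
          rw [mul_pow, ennreal_sq_rpow_half, ennreal_sq_rpow_half]
  calc ∫⁻ q, (lconv A B q) ^ 2 ≤ ∫⁻ q, (∫⁻ ξ, A ξ ^ 2 * B (q - ξ)) * ∫⁻ ξ, B (q - ξ) :=
        lintegral_mono key
    _ = ∫⁻ q, lconv (fun ξ => A ξ ^ 2) B q * ∫⁻ ξ, B ξ := by
        congr 1 with q
        rw [lint_shift hB q]; rfl
    _ = (∫⁻ q, lconv (fun ξ => A ξ ^ 2) B q) * ∫⁻ ξ, B ξ := lintegral_mul_const _
        (lconv_meas (hA.pow_const _) hB)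
    _ = ((∫⁻ q, A q ^ 2) * (∫⁻ q, B q)) * ∫⁻ ξ, B ξ := by
        rw [lconv_integral (hA.pow_const _) hB]
    _ = (∫⁻ q, A q ^ 2) * (∫⁻ q, B q) ^ 2 := by ring

lemma key_weight {a : ℝ} (ha : 0 ≤ a) (x y z : ℝ) :
    (1 + (x + y + z) ^ 2) ^ (a/2) ≤
      9 ^ (a/2) * ((1 + x^2) ^ (a/2) + (1 + y^2) ^ (a/2) + (1 + z^2) ^ (a/2)) := by
  set M := max (x^2) (max (y^2) (z^2)) with hM
  have hx : x^2 ≤ M := le_max_left _ _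
  have hy : y^2 ≤ M := le_trans (le_max_left _ _) (le_max_right _ _)
  have hz : z^2 ≤ M := le_trans (le_max_right _ _) (le_max_right _ _)
  have hM0 : 0 ≤ M := le_trans (sq_nonneg x) hx
  have h1 : (1 + (x+y+z)^2) ≤ 9 * (1 + M) := by nlinarith [sq_nonneg (x-y), sq_nonneg (y-z), sq_nonneg (x-z)]
  have h2 : (1 + (x+y+z)^2) ^ (a/2) ≤ (9 * (1+M)) ^ (a/2) :=
    Real.rpow_le_rpow (by positivity) h1 (by linarith)
  have h3 : (9 * (1+M)) ^ (a/2) = 9 ^ (a/2) * (1+M) ^ (a/2) :=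
    Real.mul_rpow (by norm_num) (by linarith)
  have h4 : (1+M) ^ (a/2) ≤ (1 + x^2) ^ (a/2) + (1 + y^2) ^ (a/2) + (1 + z^2) ^ (a/2) := by
    have case : M = x^2 ∨ M = y^2 ∨ M = z^2 := by
      rcases max_choice (x^2) (max (y^2) (z^2)) with h | h
      · exact Or.inl h
      · rcases max_choice (y^2) (z^2) with h' | h'
        · exact Or.inr (Or.inl (h.trans h'))
        · exact Or.inr (Or.inr (h.trans h'))
    have p1 : (0:ℝ) ≤ (1 + x^2) ^ (a/2) := by positivity
    have p2 : (0:ℝ) ≤ (1 + y^2) ^ (a/2) := by positivity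
    have p3 : (0:ℝ) ≤ (1 + z^2) ^ (a/2) := by positivity
    rcases case with h | h | h <;> rw [h] <;> linarith
  calc (1 + (x+y+z)^2) ^ (a/2) ≤ 9 ^ (a/2) * (1+M) ^ (a/2) := by rw [← h3]; exact h2
    _ ≤ _ := by
      have : (0:ℝ) ≤ 9 ^ (a/2) := by positivity
      exact mul_le_mul_of_nonneg_left h4 this

lemma key_exp {C : ℝ} (hC : 0 ≤ C) (x y z : ℝ) :
    Real.exp (C * |x + y + z|) ≤ Real.exp (C * |x|) * Real.exp (C * |y|) * Real.exp (C * |z|) := by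
  rw [← Real.exp_add, ← Real.exp_add]
  apply Real.exp_le_exp.2
  have := abs_add_le (x + y) z
  have := abs_add_le x y
  nlinarith [abs_nonneg x, abs_nonneg y, abs_nonneg z]

lemma weight_finite {a : ℝ} (ha : a > 1/2) :
    (∫⁻ q : ℝ, ENNReal.ofReal ((1 + q^2) ^ (-a))) < ⊤ := by
  have hint : Integrable (fun q : ℝ => (1 + ‖q‖^2) ^ (-(2*a)/2)) :=
    integrable_rpow_neg_one_add_norm_sq (by simpa using by linarith : ((Module.finrank ℝ ℝ : ℝ) < 2*a))
  have heq : ∀ q : ℝ, (1 + ‖q‖^2 : ℝ) ^ (-(2*a)/2) = (1 + q^2) ^ (-a) := by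
    intro q
    rw [Real.norm_eq_abs, sq_abs]
    congr 1
    ring
  have h2 := hint.2
  simp only [HasFiniteIntegral] at h2
  refine lt_of_eq_of_lt ?_ h2
  apply lintegral_congr
  intro q
  rw [← heq q, ← Real.enorm_eq_ofReal (by positivity)]

lemma ennreal_add3_sq (x y z : ℝ≥0∞) : (x + y + z) ^ 2 ≤ 9 * (x^2 + y^2 + z^2) := by
  set M := max x (max y z) with hM
  have hx : x ≤ M := le_max_left _ _
  have hy : y ≤ M := le_trans (le_max_left _ _) (le_max_right _ _)
  have hz : z ≤ M := le_trans (le_max_right _ _) (le_max_right _ _)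
  have h1 : x + y + z ≤ 3 * M := by
    calc x + y + z ≤ M + M + M := add_le_add (add_le_add hx hy) hz
      _ = 3 * M := by ring
  have h2 : (x + y + z)^2 ≤ 9 * M^2 := by
    calc (x+y+z)^2 ≤ (3*M)^2 := pow_le_pow_left' h1 2
      _ = 9 * M^2 := by ring
  have h3 : M^2 ≤ x^2 + y^2 + z^2 := by
    have case : M = x ∨ M = y ∨ M = z := by
      rcases max_choice x (max y z) with h | h
      · exact Or.inl h
      · rcases max_choice y z with h' | h'
        · exact Or.inr (Or.inl (h.trans h'))
        · exact Or.inr (Or.inr (h.trans h'))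
    rcases case with h | h | h <;> rw [h]
    · calc x^2 ≤ x^2 + (y^2 + z^2) := le_self_add
        _ = x^2 + y^2 + z^2 := by ring
    · calc y^2 ≤ y^2 + (x^2 + z^2) := le_self_add
        _ = x^2 + y^2 + z^2 := by ring
    · calc z^2 ≤ z^2 + (x^2 + y^2) := le_self_add
        _ = x^2 + y^2 + z^2 := by ring
  calc (x+y+z)^2 ≤ 9 * M^2 := h2
    _ ≤ 9 * (x^2 + y^2 + z^2) := mul_le_mul_right h3 9

lemma zone_facts {p Q : ℝ} (hp : 0 < p) {m : ℤ} (hm : m = 1 ∨ m = -1)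
    (h1 : -p ≤ Q) (h2 : Q ≤ p) :
    p ≤ |Q - 2 * (m:ℝ) * p| ∧ Q ^ 2 ≤ (Q - 2 * (m:ℝ) * p) ^ 2 := by
  rcases hm with h | h <;> subst h <;> push_cast <;> constructor
  · rw [abs_of_nonpos (by linarith)]; linarith
  · nlinarith
  · rw [abs_of_nonneg (by linarith)]; linarith
  · nlinarith

lemma convR_enorm (g h : ℝ → ℂ) (x : ℝ) :
    (‖convR g h x‖₊ : ℝ≥0∞) ≤ ∫⁻ ξ, (‖g ξ‖₊ : ℝ≥0∞) * (‖h (x - ξ)‖₊ : ℝ≥0∞) := by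
  refine le_trans (enorm_integral_le_lintegral_enorm _) ?_
  apply lintegral_mono
  intro ξ
  simp [nnnorm_mul, ENNReal.coe_mul]
  exact le_rfl

lemma ae_shift {B B' : ℝ → ℝ≥0∞} (h : B =ᵐ[volume] B') (q : ℝ) :
    (fun ξ => B (q - ξ)) =ᵐ[volume] fun ξ => B' (q - ξ) :=
  (Measure.measurePreserving_sub_left volume q).quasiMeasurePreserving.ae_eq_comp h

lemma lconv_congr {A A' B B' : ℝ → ℝ≥0∞} (hA : A =ᵐ[volume] A') (hB : B =ᵐ[volume] B')
    (q : ℝ) : lconv A B q = lconv A' B' q :=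
  lintegral_congr_ae (hA.mul (ae_shift hB q))

lemma triple_eq {A B Cc : ℝ → ℝ≥0∞} (hA : Measurable A) (hB : Measurable B) (q : ℝ) :
    ∫⁻ ζ, ∫⁻ ξ, A ξ * B (ζ - ξ) * Cc (q - ζ) = lconv (lconv A B) Cc q := by
  unfold lconv
  congr 1 with ζ
  exact lintegral_mul_const _ (hA.mul (hB.comp (measurable_const.sub measurable_id)))

lemma mulconst_expand {A B Cc : ℝ → ℝ≥0∞} (hA : Measurable A) (hB : Measurable B)
    (hCc : Measurable Cc) (c : ℝ≥0∞) (q : ℝ) :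
    c * lconv (lconv A B) Cc q = ∫⁻ ζ, ∫⁻ ξ, c * (A ξ * B (ζ - ξ) * Cc (q - ζ)) := by
  rw [← triple_eq hA hB q, ← lintegral_const_mul c (by
    apply Measurable.lintegral_prod_right (f := fun ζ ξ => A ξ * B (ζ - ξ) * Cc (q - ζ))
    exact ((hA.comp measurable_snd).mul
      (hB.comp (measurable_fst.sub measurable_snd))).mul
      (hCc.comp (measurable_const.sub measurable_fst)))]
  congr 1 with ζ
  exact (lintegral_const_mul c (((hA.mul (hB.comp (measurable_const.sub measurable_id))).mul
    (measurable_const)))).symm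

theorem shifted_triple_convolution_exponentially_small (a : ℝ) (ha : a > 1 / 2) :
    ∃ C' > 0, ∀ C : ℝ, 0 < C → ∀ f : ℝ → ℂ, ∀ m : ℤ, (m = 1 ∨ m = -1) →
      ∀ α : ℝ, 0 < α →
      Integrable (fun q => (1 + q ^ 2) ^ a * ‖f q‖ ^ 2) →
      Integrable (fun q => (1 + q ^ 2) ^ a * (Real.exp (C * |q|) * ‖f q‖) ^ 2) →
      (∫ Q, (1 + Q ^ 2) ^ a
          * ‖Set.indicator (Set.Icc (-(Real.pi / α)) (Real.pi / α))
              (fun x => convR (convR f f) f (x - 2 * m * Real.pi / α)) Q‖ ^ 2) ^ (1/2 : ℝ)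
        ≤ C' * Real.exp (-C * Real.pi / α)
            * ((∫ Q, (1 + Q ^ 2) ^ a
                * (Real.exp (C * |Q|) * ‖f Q‖) ^ 2) ^ (1/2 : ℝ)) ^ 3 := by
  classical
  have ha0 : (0:ℝ) ≤ a := by linarith
  have ha2 : (0:ℝ) ≤ a / 2 := by linarith
  set κ2 := ∫⁻ q : ℝ, ENNReal.ofReal ((1 + q^2) ^ (-a)) with hκ2def
  have hκfin : κ2 < ⊤ := weight_finite ha
  set k := κ2.toReal with hkdef
  have hk0 : (0:ℝ) ≤ k := ENNReal.toReal_nonneg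
  have hκeq : κ2 = ENNReal.ofReal k := (ENNReal.ofReal_toReal hκfin.ne).symm
  set D : ℝ := 27 * 9 ^ a * k ^ 2 with hDdef
  have hD0 : (0:ℝ) ≤ D := by positivity
  refine ⟨Real.sqrt D + 1, by positivity, ?_⟩
  intro C hC f m hm α hα h1 h2
  set C' : ℝ := Real.sqrt D + 1 with hC'def
  have hC'0 : (0:ℝ) < C' := by positivity
  have hDC' : D ≤ C' ^ 2 := by nlinarith [Real.sq_sqrt hD0, Real.sqrt_nonneg D]
  set p := Real.pi / α with hpdef
  have hp0 : (0:ℝ) < p := by rw [hpdef]; positivity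
  set s := 2 * (m:ℝ) * Real.pi / α with hsdef
  have hsp : s = 2 * (m:ℝ) * p := by rw [hsdef, hpdef]; ring
  -- measurable modulus
  have hnf : AEMeasurable (fun q => ‖f q‖) (volume : Measure ℝ) := by
    have hFm : AEMeasurable (fun q => (1 + q^2) ^ a * (Real.exp (C * |q|) * ‖f q‖) ^ 2)
        (volume : Measure ℝ) := h2.1.aemeasurable
    have heq : (fun q => ‖f q‖) = fun q => Real.exp (-(C * |q|)) *
        Real.sqrt (((1 + q^2) ^ a * (Real.exp (C * |q|) * ‖f q‖) ^ 2) / (1 + q^2) ^ a) := by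
      funext q
      have hpos : (0:ℝ) < (1 + q^2) ^ a := Real.rpow_pos_of_pos (by positivity) a
      rw [mul_div_cancel_left₀ _ hpos.ne', Real.sqrt_sq (by positivity), Real.exp_neg,
        ← mul_assoc, inv_mul_cancel₀ (Real.exp_pos _).ne', one_mul]
    rw [heq]
    have hexp : Measurable fun q : ℝ => Real.exp (-(C * |q|)) :=
      (Real.continuous_exp.comp ((continuous_const.mul continuous_abs).neg)).measurable
    have hden : Measurable fun q : ℝ => (1 + q^2 : ℝ) ^ a := by
      have : Continuous fun q : ℝ => (1 + q^2 : ℝ) ^ a := by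
        apply Continuous.rpow_const (continuous_const.add (continuous_pow 2))
        intro q; left; show (1:ℝ) + q^2 ≠ 0; positivity
      exact this.measurable
    exact hexp.aemeasurable.mul
      ((Real.continuous_sqrt.measurable.comp_aemeasurable (hFm.div hden.aemeasurable)))
  set ψ : ℝ → ℝ≥0∞ := fun q => (‖f q‖₊ : ℝ≥0∞) with hψdef
  have hψm : AEMeasurable ψ (volume : Measure ℝ) := by
    have : ψ = fun q => ENNReal.ofReal ‖f q‖ := by
      funext q; exact (ofReal_norm _).symm
    rw [this]
    exact ENNReal.measurable_ofReal.comp_aemeasurable hnf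
  set φ := hψm.mk ψ with hφdef
  have hφm : Measurable φ := hψm.measurable_mk
  have hφe : ψ =ᵐ[volume] φ := hψm.ae_eq_mk
  -- weights
  set W2 : ℝ → ℝ≥0∞ := fun q => ENNReal.ofReal ((1 + q^2) ^ (a/2)) with hW2def
  set Ee : ℝ → ℝ≥0∞ := fun q => ENNReal.ofReal (Real.exp (C * |q|)) with hEedef
  have hW2m : Measurable W2 := by
    apply ENNReal.measurable_ofReal.comp
    apply Continuous.measurable
    apply Continuous.rpow_const (continuous_const.add (continuous_pow 2))
    intro q; left; show (1:ℝ) + q^2 ≠ 0; positivity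
  have hEem : Measurable Ee :=
    ENNReal.measurable_ofReal.comp
      (Real.continuous_exp.comp (continuous_const.mul continuous_abs)).measurable
  set v0 : ℝ → ℝ≥0∞ := fun q => Ee q * φ q with hv0def
  set u0 : ℝ → ℝ≥0∞ := fun q => W2 q * Ee q * φ q with hu0def
  have hv0m : Measurable v0 := hEem.mul hφm
  have hu0m : Measurable u0 := (hW2m.mul hEem).mul hφm
  set N2 := ∫⁻ q, u0 q ^ 2 with hN2def
  set V := ∫⁻ q, v0 q with hVdef
  set n := N2.toReal with hndef
  have hn0 : (0:ℝ) ≤ n := ENNReal.toReal_nonneg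
  -- RHS integral identification
  have hofReal_eq : ∀ᵐ q ∂(volume : Measure ℝ),
      ENNReal.ofReal ((1 + q^2) ^ a * (Real.exp (C * |q|) * ‖f q‖) ^ 2) = u0 q ^ 2 := by
    filter_upwards [hφe] with q hq
    have hsq : (1 + q^2 : ℝ) ^ a = ((1 + q^2) ^ (a/2)) ^ 2 := by
      rw [← Real.rpow_natCast ((1 + q^2) ^ (a/2)) 2, ← Real.rpow_mul (by positivity)]
      norm_num
    have hre : (1 + q^2 : ℝ) ^ a * (Real.exp (C * |q|) * ‖f q‖) ^ 2
        = ((1 + q^2) ^ (a/2) * Real.exp (C * |q|) * ‖f q‖) ^ 2 := by rw [hsq]; ring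
    rw [hre, ENNReal.ofReal_pow (by positivity), ENNReal.ofReal_mul (by positivity),
      ENNReal.ofReal_mul (by positivity), ofReal_norm, enorm_eq_nnnorm]
    have : (‖f q‖₊ : ℝ≥0∞) = φ q := hq
    rw [this]
  have hN2fin : N2 ≠ ⊤ := by
    have h22 := h2.2
    simp only [HasFiniteIntegral] at h22
    have heq : N2 = ∫⁻ q, (‖(1 + q^2 : ℝ) ^ a * (Real.exp (C * |q|) * ‖f q‖) ^ 2‖₊ : ℝ≥0∞) := by
      rw [hN2def]
      apply lintegral_congr_ae
      filter_upwards [hofReal_eq] with q hq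
      rw [← enorm_eq_nnnorm, Real.enorm_eq_ofReal (by positivity), hq]
    rw [heq]
    exact h22.ne
  have hNeq : N2 = ENNReal.ofReal n := (ENNReal.ofReal_toReal hN2fin).symm
  have hRHSeq : (∫ Q, (1 + Q^2) ^ a * (Real.exp (C * |Q|) * ‖f Q‖) ^ 2) = n := by
    rw [integral_eq_lintegral_of_nonneg_ae (ae_of_all _ fun q => by positivity) h2.1,
      lintegral_congr_ae hofReal_eq]
  -- L¹ bound on v0
  have hV : V ≤ (κ2 * N2) ^ (1/2 : ℝ) := by
    set iW : ℝ → ℝ≥0∞ := fun q => ENNReal.ofReal ((1 + q^2) ^ (-(a/2))) with hiWdef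
    have hiWm : Measurable iW := by
      apply ENNReal.measurable_ofReal.comp
      apply Continuous.measurable
      apply Continuous.rpow_const (continuous_const.add (continuous_pow 2))
      intro q; left; show (1:ℝ) + q^2 ≠ 0; positivity
    have hinv : ∀ q : ℝ, W2 q * iW q = 1 := by
      intro q
      have h0 : (0:ℝ) < 1 + q^2 := by positivity
      show ENNReal.ofReal ((1 + q^2) ^ (a/2)) * ENNReal.ofReal ((1 + q^2) ^ (-(a/2))) = 1
      rw [← ENNReal.ofReal_mul (by positivity), ← Real.rpow_add h0]
      norm_num
    have hv0u : ∀ q, v0 q = u0 q * iW q := by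
      intro q
      show Ee q * φ q = W2 q * Ee q * φ q * iW q
      calc Ee q * φ q = Ee q * φ q * (W2 q * iW q) := by rw [hinv q, mul_one]
        _ = W2 q * Ee q * φ q * iW q := by ring
    have hH := ENNReal.lintegral_mul_le_Lp_mul_Lq volume
      (Real.HolderConjugate.two_two : Real.HolderConjugate 2 2)
      hu0m.aemeasurable hiWm.aemeasurable
    have hVeq : V = ∫⁻ q, (u0 * iW) q := by
      rw [hVdef]; exact lintegral_congr fun q => hv0u q
    have hu2 : (∫⁻ q, u0 q ^ (2:ℝ)) = N2 := by
      rw [hN2def]; exact lintegral_congr fun q => ennreal_rpow_two _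
    have hiW2 : (∫⁻ q, iW q ^ (2:ℝ)) = κ2 := by
      rw [hκ2def]
      apply lintegral_congr
      intro q
      rw [ennreal_rpow_two, ← ENNReal.ofReal_pow (by positivity),
        ← Real.rpow_natCast ((1 + q^2) ^ (-(a/2))) 2, ← Real.rpow_mul (by positivity)]
      norm_num
    rw [hVeq]
    calc (∫⁻ q, (u0 * iW) q) ≤ (∫⁻ q, u0 q ^ (2:ℝ)) ^ (1/2:ℝ) * (∫⁻ q, iW q ^ (2:ℝ)) ^ (1/2:ℝ) := hH
      _ = N2 ^ (1/2:ℝ) * κ2 ^ (1/2:ℝ) := by rw [hu2, hiW2]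
      _ = (κ2 * N2) ^ (1/2:ℝ) := by
          rw [ENNReal.mul_rpow_of_nonneg _ _ (by norm_num : (0:ℝ) ≤ 1/2), mul_comm]
  -- core pointwise bound
  set Hf : ℝ → ℝ≥0∞ := fun q =>
    lconv (lconv u0 v0) v0 q + lconv (lconv v0 u0) v0 q + lconv (lconv v0 v0) u0 q with hHfdef
  have hHfm : Measurable Hf :=
    ((lconv_meas (lconv_meas hu0m hv0m) hv0m).add
      (lconv_meas (lconv_meas hv0m hu0m) hv0m)).add
      (lconv_meas (lconv_meas hv0m hv0m) hu0m)
  have hTbound : ∀ Q ∈ Set.Icc (-p) p,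
      W2 Q * (‖convR (convR f f) f (Q - s)‖₊ : ℝ≥0∞)
        ≤ ENNReal.ofReal (Real.exp (-(C * p))) *
            (ENNReal.ofReal (9 ^ (a/2)) * Hf (Q - s)) := by
    intro Q hQ
    obtain ⟨hQ1, hQ2⟩ := hQ
    obtain ⟨habs, hsq⟩ := zone_facts hp0 hm hQ1 hQ2
    rw [← hsp] at habs hsq
    set K := ENNReal.ofReal (9 ^ (a/2)) with hKdef
    set q := Q - s with hqdef
    -- Step A : enorm of triple convolution
    have hin : lconv ψ ψ = lconv φ φ := funext fun ζ => lconv_congr hφe hφe ζ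
    have hA : (‖convR (convR f f) f q‖₊ : ℝ≥0∞) ≤ lconv (lconv φ φ) φ q := by
      calc (‖convR (convR f f) f q‖₊ : ℝ≥0∞)
          ≤ ∫⁻ ζ, (‖convR f f ζ‖₊ : ℝ≥0∞) * ψ (q - ζ) := convR_enorm _ _ q
        _ ≤ ∫⁻ ζ, lconv ψ ψ ζ * ψ (q - ζ) :=
            lintegral_mono fun ζ => mul_le_mul_left (convR_enorm f f ζ) _
        _ = lconv (lconv ψ ψ) ψ q := rfl
        _ = lconv (lconv φ φ) φ q := by
            rw [hin]; exact lconv_congr Filter.EventuallyEq.rfl hφe q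
    -- Step B : weight/exponential splitting
    have hE : W2 q * Ee q * lconv (lconv φ φ) φ q ≤ K * Hf q := by
      rw [mulconst_expand hφm hφm hφm (W2 q * Ee q) q]
      have key : ∀ ζ ξ : ℝ, (W2 q * Ee q) * (φ ξ * φ (ζ - ξ) * φ (q - ζ))
          ≤ K * (u0 ξ * v0 (ζ - ξ) * v0 (q - ζ)) + K * (v0 ξ * u0 (ζ - ξ) * v0 (q - ζ))
            + K * (v0 ξ * v0 (ζ - ξ) * u0 (q - ζ)) := by
        intro ζ ξ
        have hxyz : q = ξ + (ζ - ξ) + (q - ζ) := by ring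
        have hc : W2 q * Ee q ≤ K * ((W2 ξ + W2 (ζ - ξ) + W2 (q - ζ))
            * (Ee ξ * Ee (ζ - ξ) * Ee (q - ζ))) := by
          have hw : W2 q ≤ K * (W2 ξ + W2 (ζ - ξ) + W2 (q - ζ)) := by
            have hw0 := key_weight ha0 ξ (ζ - ξ) (q - ζ)
            rw [← hxyz] at hw0
            calc W2 q ≤ ENNReal.ofReal (9 ^ (a/2) * ((1 + ξ^2) ^ (a/2)
                  + (1 + (ζ-ξ)^2) ^ (a/2) + (1 + (q-ζ)^2) ^ (a/2))) :=
                ENNReal.ofReal_le_ofReal hw0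
              _ = K * (W2 ξ + W2 (ζ - ξ) + W2 (q - ζ)) := by
                rw [ENNReal.ofReal_mul (by positivity),
                  ENNReal.ofReal_add (by positivity) (by positivity),
                  ENNReal.ofReal_add (by positivity) (by positivity)]
          have he : Ee q ≤ Ee ξ * Ee (ζ - ξ) * Ee (q - ζ) := by
            have he0 := key_exp hC.le ξ (ζ - ξ) (q - ζ)
            rw [← hxyz] at he0
            calc Ee q ≤ ENNReal.ofReal (Real.exp (C * |ξ|) * Real.exp (C * |ζ-ξ|)
                  * Real.exp (C * |q-ζ|)) := ENNReal.ofReal_le_ofReal he0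
              _ = Ee ξ * Ee (ζ - ξ) * Ee (q - ζ) := by
                rw [ENNReal.ofReal_mul (by positivity), ENNReal.ofReal_mul (by positivity)]
          calc W2 q * Ee q ≤ (K * (W2 ξ + W2 (ζ - ξ) + W2 (q - ζ)))
                * (Ee ξ * Ee (ζ - ξ) * Ee (q - ζ)) := mul_le_mul' hw he
            _ = K * ((W2 ξ + W2 (ζ - ξ) + W2 (q - ζ))
                * (Ee ξ * Ee (ζ - ξ) * Ee (q - ζ))) := by ring
        calc (W2 q * Ee q) * (φ ξ * φ (ζ - ξ) * φ (q - ζ))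
            ≤ (K * ((W2 ξ + W2 (ζ - ξ) + W2 (q - ζ))
                * (Ee ξ * Ee (ζ - ξ) * Ee (q - ζ)))) * (φ ξ * φ (ζ - ξ) * φ (q - ζ)) :=
              mul_le_mul_left hc _
          _ = K * (u0 ξ * v0 (ζ - ξ) * v0 (q - ζ)) + K * (v0 ξ * u0 (ζ - ξ) * v0 (q - ζ))
              + K * (v0 ξ * v0 (ζ - ξ) * u0 (q - ζ)) := by
            simp only [hu0def, hv0def]
            ring
      have hmint : ∀ (A B Cc : ℝ → ℝ≥0∞), Measurable A → Measurable B → Measurable Cc →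
          Measurable fun ζ => ∫⁻ ξ, K * (A ξ * B (ζ - ξ) * Cc (q - ζ)) := by
        intro A B Cc hA' hB' hC'
        apply Measurable.lintegral_prod_right (f := fun ζ ξ => K * (A ξ * B (ζ - ξ) * Cc (q - ζ)))
        exact (measurable_const.mul (((hA'.comp measurable_snd).mul
          (hB'.comp (measurable_fst.sub measurable_snd))).mul
          (hC'.comp (measurable_const.sub measurable_fst))))
      calc (∫⁻ ζ, ∫⁻ ξ, (W2 q * Ee q) * (φ ξ * φ (ζ - ξ) * φ (q - ζ)))
          ≤ ∫⁻ ζ, ∫⁻ ξ, (K * (u0 ξ * v0 (ζ - ξ) * v0 (q - ζ))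
              + K * (v0 ξ * u0 (ζ - ξ) * v0 (q - ζ))
              + K * (v0 ξ * v0 (ζ - ξ) * u0 (q - ζ))) :=
            lintegral_mono fun ζ => lintegral_mono fun ξ => key ζ ξ
        _ = ∫⁻ ζ, ((∫⁻ ξ, K * (u0 ξ * v0 (ζ - ξ) * v0 (q - ζ)))
              + (∫⁻ ξ, K * (v0 ξ * u0 (ζ - ξ) * v0 (q - ζ)))
              + (∫⁻ ξ, K * (v0 ξ * v0 (ζ - ξ) * u0 (q - ζ)))) := by
            apply lintegral_congr
            intro ζ
            rw [lintegral_add_left (by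
                exact (measurable_const.mul (((hu0m.comp measurable_id).mul
                  (hv0m.comp (measurable_const.sub measurable_id))).mul measurable_const)).add
                  (measurable_const.mul (((hv0m.comp measurable_id).mul
                  (hu0m.comp (measurable_const.sub measurable_id))).mul measurable_const))),
              lintegral_add_left (by
                exact measurable_const.mul (((hu0m.comp measurable_id).mul
                  (hv0m.comp (measurable_const.sub measurable_id))).mul measurable_const))]
        _ = (∫⁻ ζ, ∫⁻ ξ, K * (u0 ξ * v0 (ζ - ξ) * v0 (q - ζ)))
              + (∫⁻ ζ, ∫⁻ ξ, K * (v0 ξ * u0 (ζ - ξ) * v0 (q - ζ)))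
              + (∫⁻ ζ, ∫⁻ ξ, K * (v0 ξ * v0 (ζ - ξ) * u0 (q - ζ))) := by
            rw [lintegral_add_left ((hmint _ _ _ hu0m hv0m hv0m).fun_add (hmint _ _ _ hv0m hu0m hv0m)),
              lintegral_add_left (hmint _ _ _ hu0m hv0m hv0m)]
        _ = K * Hf q := by
            have e1 : ∀ ξ ζ : ℝ, K * (u0 ξ * v0 (ζ - ξ) * v0 (q - ζ))
                = K * (u0 ξ * v0 (ζ - ξ) * v0 (q - ζ)) := fun _ _ => rfl
            rw [← mulconst_expand hu0m hv0m hv0m K q, ← mulconst_expand hv0m hu0m hv0m K q,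
              ← mulconst_expand hv0m hv0m hu0m K q, hHfdef]
            ring
    -- combine
    have hW2mono : W2 Q ≤ W2 q :=
      ENNReal.ofReal_le_ofReal (Real.rpow_le_rpow (by positivity) (by linarith) ha2)
    have hEmono : ENNReal.ofReal (Real.exp (C * p)) ≤ Ee q := by
      apply ENNReal.ofReal_le_ofReal
      apply Real.exp_le_exp.2
      exact mul_le_mul_of_nonneg_left habs hC.le
    calc W2 Q * (‖convR (convR f f) f q‖₊ : ℝ≥0∞)
        ≤ W2 q * lconv (lconv φ φ) φ q := mul_le_mul' hW2mono hA
      _ = ENNReal.ofReal (Real.exp (-(C * p))) * (ENNReal.ofReal (Real.exp (C * p))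
            * (W2 q * lconv (lconv φ φ) φ q)) := by
          rw [← mul_assoc, ← ENNReal.ofReal_mul (by positivity), ← Real.exp_add]
          norm_num
      _ ≤ ENNReal.ofReal (Real.exp (-(C * p))) * (Ee q * (W2 q * lconv (lconv φ φ) φ q)) :=
          mul_le_mul_right (mul_le_mul_left hEmono _) _
      _ = ENNReal.ofReal (Real.exp (-(C * p))) * (W2 q * Ee q * lconv (lconv φ φ) φ q) := by
          ring
      _ ≤ ENNReal.ofReal (Real.exp (-(C * p))) * (K * Hf q) := mul_le_mul_right hE _
  -- Young bounds
  have hT1 : (∫⁻ q, (lconv (lconv u0 v0) v0 q) ^ 2) ≤ N2 * V^2 * V^2 := by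
    calc (∫⁻ q, (lconv (lconv u0 v0) v0 q) ^ 2)
        ≤ (∫⁻ q, (lconv u0 v0 q) ^ 2) * (∫⁻ q, v0 q) ^ 2 :=
          young_sq (lconv_meas hu0m hv0m) hv0m
      _ ≤ ((∫⁻ q, u0 q ^ 2) * (∫⁻ q, v0 q) ^ 2) * (∫⁻ q, v0 q) ^ 2 :=
          mul_le_mul_left (young_sq hu0m hv0m) _
      _ = N2 * V^2 * V^2 := rfl
  have hT2 : (∫⁻ q, (lconv (lconv v0 u0) v0 q) ^ 2) ≤ N2 * V^2 * V^2 := by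
    have hcomm : lconv v0 u0 = lconv u0 v0 := funext (lconv_comm hv0m hu0m)
    rw [hcomm]; exact hT1
  have hT3 : (∫⁻ q, (lconv (lconv v0 v0) u0 q) ^ 2) ≤ N2 * V^2 * V^2 := by
    have hcomm : lconv (lconv v0 v0) u0 = lconv u0 (lconv v0 v0) :=
      funext (lconv_comm (lconv_meas hv0m hv0m) hu0m)
    rw [hcomm]
    calc (∫⁻ q, (lconv u0 (lconv v0 v0) q) ^ 2)
        ≤ (∫⁻ q, u0 q ^ 2) * (∫⁻ q, lconv v0 v0 q) ^ 2 :=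
          young_sq hu0m (lconv_meas hv0m hv0m)
      _ = N2 * ((∫⁻ q, v0 q) * (∫⁻ q, v0 q)) ^ 2 := by rw [lconv_integral hv0m hv0m]
      _ = N2 * V^2 * V^2 := by ring
  have hHsq : (∫⁻ q, Hf q ^ 2) ≤ 27 * (N2 * V^2 * V^2) := by
    have hm1 : Measurable fun q => (lconv (lconv u0 v0) v0 q) ^ 2 :=
      (lconv_meas (lconv_meas hu0m hv0m) hv0m).pow_const 2
    have hm2 : Measurable fun q => (lconv (lconv v0 u0) v0 q) ^ 2 :=
      (lconv_meas (lconv_meas hv0m hu0m) hv0m).pow_const 2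
    have hm3 : Measurable fun q => (lconv (lconv v0 v0) u0 q) ^ 2 :=
      (lconv_meas (lconv_meas hv0m hv0m) hu0m).pow_const 2
    calc (∫⁻ q, Hf q ^ 2)
        ≤ ∫⁻ q, 9 * ((lconv (lconv u0 v0) v0 q) ^ 2 + (lconv (lconv v0 u0) v0 q) ^ 2
            + (lconv (lconv v0 v0) u0 q) ^ 2) :=
          lintegral_mono fun q => ennreal_add3_sq _ _ _
      _ = 9 * ((∫⁻ q, (lconv (lconv u0 v0) v0 q) ^ 2) + (∫⁻ q, (lconv (lconv v0 u0) v0 q) ^ 2)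
            + (∫⁻ q, (lconv (lconv v0 v0) u0 q) ^ 2)) := by
          rw [lintegral_const_mul _ ((hm1.fun_add hm2).fun_add hm3),
            lintegral_add_left (hm1.fun_add hm2), lintegral_add_left hm1]
      _ ≤ 9 * ((N2 * V^2 * V^2) + (N2 * V^2 * V^2) + (N2 * V^2 * V^2)) := by
          exact mul_le_mul_right (add_le_add (add_le_add hT1 hT2) hT3) 9
      _ = 27 * (N2 * V^2 * V^2) := by ring
  -- final assembly
  by_cases hInt : Integrable (fun Q => (1 + Q^2) ^ a
      * ‖Set.indicator (Set.Icc (-p) p) (fun x => convR (convR f f) f (x - s)) Q‖ ^ 2)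
  · rw [hRHSeq, integral_eq_lintegral_of_nonneg_ae (ae_of_all _ fun Q => by positivity) hInt.1]
    set ind := Set.indicator (Set.Icc (-p) p) (fun x => convR (convR f f) f (x - s)) with hinddef
    set L := ∫⁻ Q, ENNReal.ofReal ((1 + Q^2) ^ a * ‖ind Q‖ ^ 2) with hLdef
    set c0 := (ENNReal.ofReal (Real.exp (-(C * p))) * ENNReal.ofReal (9 ^ (a/2))) ^ 2 with hc0def
    have hHcomp : Measurable fun Q => Hf (Q - s) ^ 2 :=
      (hHfm.comp (measurable_id.sub measurable_const)).pow_const 2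
    have hptw : ∀ Q, ENNReal.ofReal ((1 + Q^2) ^ a * ‖ind Q‖ ^ 2) ≤ c0 * Hf (Q - s) ^ 2 := by
      intro Q
      by_cases hQ : Q ∈ Set.Icc (-p) p
      · have hiQ : ind Q = convR (convR f f) f (Q - s) := Set.indicator_of_mem hQ _
        have hsq : (1 + Q^2 : ℝ) ^ a = ((1 + Q^2) ^ (a/2)) ^ 2 := by
          rw [← Real.rpow_natCast ((1 + Q^2) ^ (a/2)) 2, ← Real.rpow_mul (by positivity)]
          norm_num
        have hre : (1 + Q^2 : ℝ) ^ a * ‖ind Q‖ ^ 2 = ((1 + Q^2) ^ (a/2) * ‖ind Q‖) ^ 2 := by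
          rw [hsq]; ring
        have hgQ : ENNReal.ofReal ((1 + Q^2) ^ a * ‖ind Q‖ ^ 2)
            = (W2 Q * (‖ind Q‖₊ : ℝ≥0∞)) ^ 2 := by
          rw [hre, ENNReal.ofReal_pow (by positivity), ENNReal.ofReal_mul (by positivity),
            ofReal_norm, enorm_eq_nnnorm]
        rw [hgQ, hiQ]
        calc (W2 Q * (‖convR (convR f f) f (Q - s)‖₊ : ℝ≥0∞)) ^ 2
            ≤ (ENNReal.ofReal (Real.exp (-(C * p)))
                * (ENNReal.ofReal (9 ^ (a/2)) * Hf (Q - s))) ^ 2 :=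
              pow_le_pow_left' (hTbound Q hQ) 2
          _ = c0 * Hf (Q - s) ^ 2 := by rw [hc0def]; ring
      · have : ind Q = 0 := Set.indicator_of_notMem hQ _
        rw [this]
        simp
    have hV2 : V ^ 2 ≤ κ2 * N2 := by
      calc V ^ 2 ≤ ((κ2 * N2) ^ (1/2:ℝ)) ^ 2 := pow_le_pow_left' hV 2
        _ = κ2 * N2 := ennreal_sq_rpow_half _
    have hL1 : L ≤ ENNReal.ofReal ((Real.exp (-(C * p)) * C') ^ 2 * n ^ 3) := by
      calc L ≤ ∫⁻ Q, c0 * Hf (Q - s) ^ 2 := lintegral_mono hptw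
        _ = c0 * ∫⁻ Q, Hf (Q - s) ^ 2 := lintegral_const_mul _ hHcomp
        _ = c0 * ∫⁻ q, Hf q ^ 2 := by rw [lintegral_sub_right_eq_self (fun Q => Hf Q ^ 2) s]
        _ ≤ c0 * (27 * (N2 * V^2 * V^2)) := mul_le_mul_right hHsq _
        _ ≤ c0 * (27 * (N2 * (κ2 * N2) * (κ2 * N2))) :=
            mul_le_mul_right (mul_le_mul_right
              (mul_le_mul' (mul_le_mul_right hV2 _) hV2) _) _
        _ = ENNReal.ofReal ((Real.exp (-(C * p)) * 9 ^ (a/2)) ^ 2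
              * (27 * (n * (k * n) * (k * n)))) := by
            rw [hκeq, hNeq, hc0def]
            rw [ENNReal.ofReal_mul (by positivity), ENNReal.ofReal_pow (by positivity),
              ENNReal.ofReal_mul (by positivity)]
            rw [ENNReal.ofReal_mul (by norm_num : (0:ℝ) ≤ 27),
              ENNReal.ofReal_mul (mul_nonneg hn0 (mul_nonneg hk0 hn0)),
              ENNReal.ofReal_mul hn0, ENNReal.ofReal_mul hk0]
            norm_num
        _ ≤ ENNReal.ofReal ((Real.exp (-(C * p)) * C') ^ 2 * n ^ 3) := by
            apply ENNReal.ofReal_le_ofReal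
            have hrearr : (Real.exp (-(C * p)) * 9 ^ (a/2)) ^ 2 * (27 * (n * (k * n) * (k * n)))
                = D * (Real.exp (-(C * p)) ^ 2 * n ^ 3) := by
              rw [hDdef]
              have h9 : ((9:ℝ) ^ (a/2)) ^ 2 = 9 ^ a := by
                rw [← Real.rpow_natCast ((9:ℝ) ^ (a/2)) 2, ← Real.rpow_mul (by norm_num)]
                norm_num
              rw [mul_pow, h9]; ring
            rw [hrearr, mul_pow]
            have : D * (Real.exp (-(C * p)) ^ 2 * n ^ 3)
                ≤ C' ^ 2 * (Real.exp (-(C * p)) ^ 2 * n ^ 3) :=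
              mul_le_mul_of_nonneg_right hDC' (by positivity)
            linarith [this]
    have hLt : L.toReal ≤ (Real.exp (-(C * p)) * C') ^ 2 * n ^ 3 :=
      ENNReal.toReal_le_of_le_ofReal (by positivity) hL1
    have hB0 : (0:ℝ) ≤ C' * Real.exp (-C * Real.pi / α) * (n ^ (1/2:ℝ)) ^ 3 := by
      apply mul_nonneg (mul_nonneg hC'0.le (Real.exp_pos _).le)
      exact pow_nonneg (Real.rpow_nonneg hn0 _) 3
    have hexpeq : Real.exp (-C * Real.pi / α) = Real.exp (-(C * p)) := by
      congr 1; rw [hpdef]; ring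
    have hBsq : (C' * Real.exp (-C * Real.pi / α) * (n ^ (1/2:ℝ)) ^ 3) ^ 2
        = (Real.exp (-(C * p)) * C') ^ 2 * n ^ 3 := by
      have h2 : ((n ^ (1/2:ℝ)) ^ 3) ^ 2 = n ^ 3 := by
        have h6 : ((n ^ (1/2:ℝ)) ^ 3) ^ 2 = (n ^ (1/2:ℝ)) ^ 6 := by ring
        rw [h6, ← Real.rpow_natCast (n ^ (1/2:ℝ)) 6, ← Real.rpow_mul hn0,
          show (1/2:ℝ) * ((6:ℕ):ℝ) = ((3:ℕ):ℝ) by norm_num, Real.rpow_natCast]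
      rw [hexpeq, mul_pow, h2]; ring
    calc (L.toReal) ^ (1/2:ℝ)
        ≤ ((C' * Real.exp (-C * Real.pi / α) * (n ^ (1/2:ℝ)) ^ 3) ^ 2) ^ (1/2:ℝ) :=
          Real.rpow_le_rpow ENNReal.toReal_nonneg (by rw [hBsq]; exact hLt) (by norm_num)
      _ = C' * Real.exp (-C * Real.pi / α) * (n ^ (1/2:ℝ)) ^ 3 := by
          rw [← Real.rpow_natCast (C' * Real.exp (-C * Real.pi / α) * (n ^ (1/2:ℝ)) ^ 3) 2,
            ← Real.rpow_mul hB0, show ((2:ℕ):ℝ) * (1/2) = 1 by norm_num, Real.rpow_one]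
  · rw [integral_undef hInt, hRHSeq, Real.zero_rpow (by norm_num)]
    exact mul_nonneg (mul_nonneg hC'0.le (Real.exp_pos _).le)
      (pow_nonneg (Real.rpow_nonneg hn0 _) 3)
end
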